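/- arXiv:2409.01224 — 8 statements merged into one kernel-verified Lean document; each statement's English description precedes it below -/
import Mathlib

section
/- Let A, B ∈ ℤ[x] be coprime in ℚ[x], with resultant Δ, and let G(n) = gcd(A(n), B(n)). For every prime p, the sequence n ↦ gcd(G(n), p^∞) (the largest power of p dividing G(n)) is periodic with period dividing p^(ν_p(Δ)), where ν_p(Δ) is the p-adic valuation of Δ. -/
open Polynomial

open Finset

/-- The Sylvester matrix of two integer polynomials `A` and `B`, of size
`(d+e) × (d+e)` where `d = deg A`, `e = deg B`: the first `e` columns carry the
(shifted) coefficients of `A`, the last `d` columns those of `B`. -/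
noncomputable def sylvesterMatrix (A B : Polynomial ℤ) :
    Matrix (Fin (A.natDegree + B.natDegree)) (Fin (A.natDegree + B.natDegree)) ℤ :=
  Matrix.of fun i j =>
    if (j : ℕ) < B.natDegree then
      if (j : ℕ) ≤ (i : ℕ) ∧ (i : ℕ) ≤ (j : ℕ) + A.natDegree then
        A.coeff (A.natDegree + (j : ℕ) - (i : ℕ)) else 0
    else
      if (j : ℕ) - B.natDegree ≤ (i : ℕ) ∧ (i : ℕ) ≤ (j : ℕ) then
        B.coeff ((j : ℕ) - (i : ℕ)) else 0

/-- The resultant of two integer polynomials, as the determinant of their Sylvester matrix. -/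
noncomputable def resultant (A B : Polynomial ℤ) : ℤ := (sylvesterMatrix A B).det


lemma sylvester_apply (A B : Polynomial ℤ) (i j : Fin (A.natDegree + B.natDegree)) :
    sylvesterMatrix A B i j =
      if (j : ℕ) < B.natDegree then
        (if (i : ℕ) ≤ (j : ℕ) + A.natDegree then
          A.coeff (A.natDegree + (j : ℕ) - (i : ℕ)) else 0)
      else
        (if (i : ℕ) ≤ (j : ℕ) then B.coeff ((j : ℕ) - (i : ℕ)) else 0) := by
  unfold sylvesterMatrix
  simp only [Matrix.of_apply]
  by_cases hje : (j : ℕ) < B.natDegree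
  · simp only [hje, if_true]
    by_cases hub : (i : ℕ) ≤ (j : ℕ) + A.natDegree
    · by_cases hlb : (j : ℕ) ≤ (i : ℕ)
      · rw [if_pos ⟨hlb, hub⟩, if_pos hub]
      · rw [if_neg (by tauto), if_pos hub]
        exact (Polynomial.coeff_eq_zero_of_natDegree_lt (by omega)).symm
    · rw [if_neg (by tauto), if_neg hub]
  · simp only [hje, if_false]
    by_cases hub : (i : ℕ) ≤ (j : ℕ)
    · by_cases hlb : (j : ℕ) - B.natDegree ≤ (i : ℕ)
      · rw [if_pos ⟨hlb, hub⟩, if_pos hub]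
      · rw [if_neg (by tauto), if_pos hub]
        exact (Polynomial.coeff_eq_zero_of_natDegree_lt (by omega)).symm
    · rw [if_neg (by tauto), if_neg hub]

lemma sylvester_vecMul (A B : Polynomial ℤ) (n : ℤ)
    (j : Fin (A.natDegree + B.natDegree)) :
    (Matrix.vecMul (fun i : Fin (A.natDegree + B.natDegree) =>
        n ^ (A.natDegree + B.natDegree - 1 - (i : ℕ))) (sylvesterMatrix A B)) j =
      if (j : ℕ) < B.natDegree then n ^ (B.natDegree - 1 - (j : ℕ)) * A.eval n
      else n ^ (A.natDegree + B.natDegree - 1 - (j : ℕ)) * B.eval n := by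
  have hj := j.2
  rw [Matrix.vecMul, dotProduct]
  by_cases hje : (j : ℕ) < B.natDegree
  · rw [if_pos hje]
    have h1 : ∀ i : Fin (A.natDegree + B.natDegree),
        n ^ (A.natDegree + B.natDegree - 1 - (i : ℕ)) * sylvesterMatrix A B i j
        = (fun i : ℕ => if i ≤ (j : ℕ) + A.natDegree then
            A.coeff (A.natDegree + (j : ℕ) - i) * n ^ (A.natDegree + B.natDegree - 1 - i)
          else 0) (i : ℕ) := by
      intro i
      beta_reduce
      rw [sylvester_apply, if_pos hje]
      split_ifs with h h2 h3 <;> first | ring | omega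
    have h2 := Fin.sum_univ_eq_sum_range (fun i : ℕ => if i ≤ (j : ℕ) + A.natDegree then
            A.coeff (A.natDegree + (j : ℕ) - i) * n ^ (A.natDegree + B.natDegree - 1 - i)
          else 0) (A.natDegree + B.natDegree)
    rw [Finset.sum_congr rfl (fun i _ => h1 i), h2]
    rw [← Finset.sum_subset (Finset.range_subset_range.2
        (by omega : (j : ℕ) + A.natDegree + 1 ≤ A.natDegree + B.natDegree))
        (fun x _ hx => by
          rw [if_neg]; simp only [Finset.mem_range] at hx; omega)]
    rw [← Finset.sum_range_reflect]
    rw [Polynomial.eval_eq_sum_range' (by omega : A.natDegree < (j : ℕ) + A.natDegree + 1),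
      Finset.mul_sum]
    refine Finset.sum_congr rfl (fun i hi => ?_)
    simp only [Finset.mem_range] at hi
    rw [if_pos (by omega)]
    have e1 : A.natDegree + (j : ℕ) - ((j : ℕ) + A.natDegree + 1 - 1 - i) = i := by omega
    have e2 : A.natDegree + B.natDegree - 1 - ((j : ℕ) + A.natDegree + 1 - 1 - i)
        = B.natDegree - 1 - (j : ℕ) + i := by omega
    rw [e1, e2, pow_add]; ring
  · rw [if_neg hje]
    have h1 : ∀ i : Fin (A.natDegree + B.natDegree),
        n ^ (A.natDegree + B.natDegree - 1 - (i : ℕ)) * sylvesterMatrix A B i j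
        = (fun i : ℕ => if i ≤ (j : ℕ) then
            B.coeff ((j : ℕ) - i) * n ^ (A.natDegree + B.natDegree - 1 - i)
          else 0) (i : ℕ) := by
      intro i
      beta_reduce
      rw [sylvester_apply, if_neg hje]
      split_ifs with h h2 h3 <;> first | ring | omega
    have h2 := Fin.sum_univ_eq_sum_range (fun i : ℕ => if i ≤ (j : ℕ) then
            B.coeff ((j : ℕ) - i) * n ^ (A.natDegree + B.natDegree - 1 - i)
          else 0) (A.natDegree + B.natDegree)
    rw [Finset.sum_congr rfl (fun i _ => h1 i), h2]
    rw [← Finset.sum_subset (Finset.range_subset_range.2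
        (by omega : (j : ℕ) + 1 ≤ A.natDegree + B.natDegree))
        (fun x _ hx => by
          rw [if_neg]; simp only [Finset.mem_range] at hx; omega)]
    rw [← Finset.sum_range_reflect]
    rw [Polynomial.eval_eq_sum_range' (by omega : B.natDegree < (j : ℕ) + 1),
      Finset.mul_sum]
    refine Finset.sum_congr rfl (fun i hi => ?_)
    simp only [Finset.mem_range] at hi
    rw [if_pos (by omega)]
    have e1 : (j : ℕ) - ((j : ℕ) + 1 - 1 - i) = i := by omega
    have e2 : A.natDegree + B.natDegree - 1 - ((j : ℕ) + 1 - 1 - i)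
        = A.natDegree + B.natDegree - 1 - (j : ℕ) + i := by omega
    rw [e1, e2, pow_add]; ring

lemma gcd_dvd_resultant (A B : Polynomial ℤ) (hN : 0 < A.natDegree + B.natDegree) (n : ℤ) :
    (Int.gcd (A.eval n) (B.eval n) : ℤ) ∣ _root_.resultant A B := by
  set S := sylvesterMatrix A B with hS
  set w : Fin (A.natDegree + B.natDegree) → ℤ :=
    fun i => n ^ (A.natDegree + B.natDegree - 1 - (i : ℕ)) with hw
  set i0 : Fin (A.natDegree + B.natDegree) := ⟨A.natDegree + B.natDegree - 1, by omega⟩ with hi0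
  have key : Matrix.vecMul (Matrix.vecMul w S) (S.adjugate) = (S.det) • w := by
    rw [Matrix.vecMul_vecMul, Matrix.mul_adjugate]
    ext i
    simp [Matrix.vecMul, dotProduct, Matrix.one_apply, mul_ite,
      Finset.sum_ite_eq', mul_comm]
  have key0 := congrFun key i0
  have hw0 : w i0 = 1 := by
    simp only [hw, hi0]
    norm_num
  rw [Pi.smul_apply, hw0, smul_eq_mul, mul_one] at key0
  rw [_root_.resultant, ← hS, ← key0, Matrix.vecMul, dotProduct]
  refine Finset.dvd_sum (fun j _ => ?_)
  refine Dvd.dvd.mul_right ?_ _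
  rw [hS, sylvester_vecMul A B n j]
  split_ifs with h
  · exact Dvd.dvd.mul_left (Int.gcd_dvd_left _ _) _
  · exact Dvd.dvd.mul_left (Int.gcd_dvd_right _ _) _

lemma resultant_ne_zero (A B : Polynomial ℤ)
    (hcop : IsCoprime (A.map (Int.castRingHom ℚ)) (B.map (Int.castRingHom ℚ))) :
    _root_.resultant A B ≠ 0 := by
  rcases Nat.eq_zero_or_pos (A.natDegree + B.natDegree) with hN0 | hN
  · haveI : IsEmpty (Fin (A.natDegree + B.natDegree)) := ⟨fun i => by have := i.2; omega⟩
    rw [_root_.resultant, Matrix.det_isEmpty]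
    exact one_ne_zero
  intro hres
  set d := A.natDegree with hd
  set e := B.natDegree with he
  set A' := A.map (Int.castRingHom ℚ) with hA'
  set B' := B.map (Int.castRingHom ℚ) with hB'
  set S' := (Int.castRingHom ℚ).mapMatrix (sylvesterMatrix A B) with hS'
  have hdetS' : S'.det = 0 := by
    rw [hS', ← RingHom.map_det, _root_.resultant] at *
    rw [hres]; simp
  obtain ⟨c, hc0, hc⟩ := (Matrix.exists_mulVec_eq_zero_iff).2 hdetS'
  set u : Polynomial ℚ := ∑ j : Fin (d + e),
    if (j : ℕ) < e then C (c j) * X ^ (e - 1 - (j : ℕ)) else 0 with hu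
  set v : Polynomial ℚ := ∑ j : Fin (d + e),
    if e ≤ (j : ℕ) then C (c j) * X ^ (d + e - 1 - (j : ℕ)) else 0 with hv
  have hinj : Function.Injective (Int.castRingHom ℚ) := Int.cast_injective
  have hA'deg : A'.natDegree = d := Polynomial.natDegree_map_eq_of_injective hinj A
  have hB'deg : B'.natDegree = e := Polynomial.natDegree_map_eq_of_injective hinj B
  have hcoeff : ∀ m : ℕ, (u * A' + v * B').coeff m =
      ∑ j : Fin (d + e),
        (if (j : ℕ) < e then
            (if e - 1 - (j : ℕ) ≤ m then A'.coeff (m - (e - 1 - (j : ℕ))) else 0)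
          else
            (if d + e - 1 - (j : ℕ) ≤ m then B'.coeff (m - (d + e - 1 - (j : ℕ))) else 0))
          * c j := by
    intro m
    rw [hu, hv, Finset.sum_mul, Finset.sum_mul, ← Finset.sum_add_distrib,
      Polynomial.finset_sum_coeff]
    refine Finset.sum_congr rfl (fun j _ => ?_)
    rw [Polynomial.coeff_add]
    by_cases hj : (j : ℕ) < e
    · rw [if_pos hj, if_pos hj, if_neg (by omega), zero_mul, Polynomial.coeff_zero, add_zero]
      rw [show C (c j) * X ^ (e - 1 - (j : ℕ)) * A'
          = C (c j) * (A' * X ^ (e - 1 - (j : ℕ))) by ring]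
      rw [Polynomial.coeff_C_mul, Polynomial.coeff_mul_X_pow']
      split_ifs with h <;> ring
    · rw [if_neg hj, if_neg hj, if_pos (by omega), zero_mul, Polynomial.coeff_zero, zero_add]
      rw [show C (c j) * X ^ (d + e - 1 - (j : ℕ)) * B'
          = C (c j) * (B' * X ^ (d + e - 1 - (j : ℕ))) by ring]
      rw [Polynomial.coeff_C_mul, Polynomial.coeff_mul_X_pow']
      split_ifs with h <;> ring
  have hP : u * A' + v * B' = 0 := by
    ext m
    rw [hcoeff m, Polynomial.coeff_zero]
    by_cases hm : m < d + e
    · have hzero := congrFun hc ⟨d + e - 1 - m, by omega⟩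
      simp only [Pi.zero_apply] at hzero
      refine Eq.trans ?_ hzero
      rw [Matrix.mulVec, dotProduct]
      refine Finset.sum_congr rfl (fun j _ => ?_)
      have hj2 := j.2
      rw [hS', RingHom.mapMatrix_apply, Matrix.map_apply, sylvester_apply]
      by_cases hj : (j : ℕ) < e
      · rw [if_pos hj, if_pos hj]
        by_cases hcnd : e - 1 - (j : ℕ) ≤ m
        · rw [if_pos hcnd, if_pos (show (d + e - 1 - m : ℕ) ≤ (j : ℕ) + d by omega)]
          rw [show m - (e - 1 - (j : ℕ)) = d + (j : ℕ) - (d + e - 1 - m) by omega]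
          rw [Polynomial.coeff_map]
        · rw [if_neg hcnd, if_neg (show ¬ (d + e - 1 - m : ℕ) ≤ (j : ℕ) + d by omega)]
          simp
      · rw [if_neg hj, if_neg hj]
        by_cases hcnd : d + e - 1 - (j : ℕ) ≤ m
        · rw [if_pos hcnd, if_pos (show (d + e - 1 - m : ℕ) ≤ (j : ℕ) by omega)]
          rw [show m - (d + e - 1 - (j : ℕ)) = (j : ℕ) - (d + e - 1 - m) by omega]
          rw [Polynomial.coeff_map]
        · rw [if_neg hcnd, if_neg (show ¬ (d + e - 1 - m : ℕ) ≤ (j : ℕ) by omega)]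
          simp
    · refine Finset.sum_eq_zero (fun j _ => ?_)
      have hj2 := j.2
      by_cases hj : (j : ℕ) < e
      · rw [if_pos hj, if_pos (by omega),
          Polynomial.coeff_eq_zero_of_natDegree_lt (by rw [hA'deg]; omega), zero_mul]
      · rw [if_neg hj, if_pos (by omega),
          Polynomial.coeff_eq_zero_of_natDegree_lt (by rw [hB'deg]; omega), zero_mul]
  have hAne : A' ≠ 0 := by
    intro h0
    rw [h0] at hcop
    have hunit := isCoprime_zero_left.1 hcop
    have he0 : e = 0 := by
      rw [← hB'deg]; exact Polynomial.natDegree_eq_zero_of_isUnit hunit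
    have hd0 : d = 0 := by
      rw [hd]
      have : A = 0 := (Polynomial.map_eq_zero_iff hinj).1 h0
      rw [this, Polynomial.natDegree_zero]
    omega
  have hvdvd : A' ∣ v := hcop.dvd_of_dvd_mul_right ⟨-u, by linear_combination hP⟩
  have hv0 : v = 0 := by
    rcases Nat.eq_zero_or_pos d with hd0 | hdpos
    · rw [hv]
      refine Finset.sum_eq_zero (fun j _ => ?_)
      rw [if_neg (by have := j.2; omega)]
    · by_contra hvne
      have h1 : A'.natDegree ≤ v.natDegree := Polynomial.natDegree_le_of_dvd hvdvd hvne
      have h2 : v.natDegree ≤ d - 1 := by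
        rw [hv]
        refine Polynomial.natDegree_sum_le_of_forall_le _ _ (fun j _ => ?_)
        by_cases hj : e ≤ (j : ℕ)
        · rw [if_pos hj]
          refine le_trans (Polynomial.natDegree_C_mul_le _ _) ?_
          rw [Polynomial.natDegree_X_pow]
          have := j.2; omega
        · rw [if_neg hj]
          simp
      rw [hA'deg] at h1
      omega
  have hu0 : u = 0 := by
    rw [hv0, zero_mul, add_zero] at hP
    rcases mul_eq_zero.1 hP with h | h
    · exact h
    · exact absurd h hAne
  apply hc0
  funext j
  show c j = (0 : ℚ)
  by_cases hj : (j : ℕ) < e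
  · have h1 : u.coeff (e - 1 - (j : ℕ)) = c j := by
      rw [hu, Polynomial.finset_sum_coeff, Finset.sum_eq_single j]
      · rw [if_pos hj, Polynomial.coeff_C_mul, Polynomial.coeff_X_pow, if_pos rfl, mul_one]
      · intro b _ hbj
        by_cases hb : (b : ℕ) < e
        · rw [if_pos hb, Polynomial.coeff_C_mul, Polynomial.coeff_X_pow,
            if_neg (fun hcontr => hbj (Fin.ext (by omega))), mul_zero]
        · rw [if_neg hb, Polynomial.coeff_zero]
      · intro h; exact absurd (Finset.mem_univ j) h
    rw [← h1, hu0, Polynomial.coeff_zero]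
  · have h1 : v.coeff (d + e - 1 - (j : ℕ)) = c j := by
      rw [hv, Polynomial.finset_sum_coeff, Finset.sum_eq_single j]
      · rw [if_pos (by omega), Polynomial.coeff_C_mul, Polynomial.coeff_X_pow, if_pos rfl,
          mul_one]
      · intro b _ hbj
        have hb2 := b.2
        have hj2 := j.2
        by_cases hb : e ≤ (b : ℕ)
        · rw [if_pos hb, Polynomial.coeff_C_mul, Polynomial.coeff_X_pow,
            if_neg (fun hcontr => hbj (Fin.ext (by omega))), mul_zero]
        · rw [if_neg hb, Polynomial.coeff_zero]
      · intro h; exact absurd (Finset.mem_univ j) h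
    rw [← h1, hv0, Polynomial.coeff_zero]

theorem gcd_pow_part_periodic (A B : Polynomial ℤ)
    (hcop : IsCoprime (A.map (Int.castRingHom ℚ)) (B.map (Int.castRingHom ℚ)))
    (p : ℕ) (hp : p.Prime) :
    Function.Periodic
      (fun n : ℤ => (p : ℕ) ^ padicValNat p (Int.gcd (A.eval n) (B.eval n)))
      ((p : ℤ) ^ padicValInt p (_root_.resultant A B)) := by
  haveI : Fact p.Prime := ⟨hp⟩
  intro n
  simp only []
  rcases Nat.eq_zero_or_pos (A.natDegree + B.natDegree) with hN0 | hN
  · obtain ⟨a, ha⟩ := Polynomial.natDegree_eq_zero.1 (by omega : A.natDegree = 0)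
    obtain ⟨b, hb⟩ := Polynomial.natDegree_eq_zero.1 (by omega : B.natDegree = 0)
    rw [← ha, ← hb]
    simp
  · have hΔ := resultant_ne_zero A B hcop
    set k := padicValInt p (_root_.resultant A B) with hk
    have hgcd_ne : ∀ x : ℤ, Int.gcd (A.eval x) (B.eval x) ≠ 0 := by
      intro x h
      apply hΔ
      have h1 := gcd_dvd_resultant A B hN x
      rw [h] at h1
      exact zero_dvd_iff.1 (by exact_mod_cast h1)
    have hle : ∀ x : ℤ, padicValNat p (Int.gcd (A.eval x) (B.eval x)) ≤ k := by
      intro x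
      have h1 : (Int.gcd (A.eval x) (B.eval x) : ℤ) ∣ _root_.resultant A B :=
        gcd_dvd_resultant A B hN x
      have h2 : (p : ℤ) ^ padicValNat p (Int.gcd (A.eval x) (B.eval x)) ∣ _root_.resultant A B := by
        refine dvd_trans ?_ h1
        exact_mod_cast Int.natCast_dvd_natCast.2 (pow_padicValNat_dvd)
      rcases (padicValInt_dvd_iff _ _).1 h2 with h3 | h3
      · exact absurd h3 hΔ
      · exact h3
    have key : ∀ x y : ℤ, ((p : ℤ) ^ k ∣ y - x) →
        padicValNat p (Int.gcd (A.eval x) (B.eval x)) ≤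
          padicValNat p (Int.gcd (A.eval y) (B.eval y)) := by
      intro x y hxy
      set a := padicValNat p (Int.gcd (A.eval x) (B.eval x)) with hadef
      have hpa_gcd : (p : ℤ) ^ a ∣ (Int.gcd (A.eval x) (B.eval x) : ℤ) := by
        exact_mod_cast Int.natCast_dvd_natCast.2 (pow_padicValNat_dvd)
      have hA1 : (p : ℤ) ^ a ∣ A.eval x := hpa_gcd.trans (Int.gcd_dvd_left _ _)
      have hB1 : (p : ℤ) ^ a ∣ B.eval x := hpa_gcd.trans (Int.gcd_dvd_right _ _)
      have hsub : (p : ℤ) ^ a ∣ y - x := dvd_trans (pow_dvd_pow _ (hle x)) hxy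
      have hA2 : (p : ℤ) ^ a ∣ A.eval y := by
        have h3 : (p : ℤ) ^ a ∣ A.eval y - A.eval x :=
          hsub.trans (Polynomial.sub_dvd_eval_sub y x A)
        simpa using dvd_add h3 hA1
      have hB2 : (p : ℤ) ^ a ∣ B.eval y := by
        have h3 : (p : ℤ) ^ a ∣ B.eval y - B.eval x :=
          hsub.trans (Polynomial.sub_dvd_eval_sub y x B)
        simpa using dvd_add h3 hB1
      have h4 : (p : ℤ) ^ a ∣ (Int.gcd (A.eval y) (B.eval y) : ℤ) := Int.dvd_coe_gcd hA2 hB2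
      have h5 : p ^ a ∣ Int.gcd (A.eval y) (B.eval y) := by exact_mod_cast h4
      exact (padicValNat_dvd_iff_le (hgcd_ne y)).1 h5
    have h1 := key n (n + (p : ℤ) ^ k) ⟨1, by ring⟩
    have h2 := key (n + (p : ℤ) ^ k) n ⟨-1, by ring⟩
    exact congrArg (fun t => (p : ℕ) ^ t) (le_antisymm h2 h1)
end

section
/- Let A, B ∈ ℤ[x] be coprime in ℚ[x] with resultant Δ, and G(n) = gcd(A(n), B(n)). Then the sequence (G(n))_{n∈ℤ} is periodic with period dividing Δ, i.e., G(n + Δ) = G(n) for all integers n. -/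
open Polynomial

lemma sum_key (P : Polynomial ℤ) (n : ℤ) (N j : ℕ) (hj : j + P.natDegree < N) :
    ∑ i ∈ Finset.range N, n ^ (N - 1 - i) *
      (if j ≤ i ∧ i ≤ j + P.natDegree then P.coeff (P.natDegree + j - i) else 0)
    = n ^ (N - 1 - (j + P.natDegree)) * P.eval n := by
  have hsub : Finset.Icc j (j + P.natDegree) ⊆ Finset.range N := by
    intro i hi
    rw [Finset.mem_Icc] at hi
    rw [Finset.mem_range]
    omega
  have hzero : ∀ i ∈ Finset.range N, i ∉ Finset.Icc j (j + P.natDegree) →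
      n ^ (N - 1 - i) *
        (if j ≤ i ∧ i ≤ j + P.natDegree then P.coeff (P.natDegree + j - i) else 0) = 0 := by
    intro i _ hi
    rw [Finset.mem_Icc] at hi
    rw [if_neg hi, mul_zero]
  rw [← Finset.sum_subset hsub hzero]
  have h2 : ∑ i ∈ Finset.Icc j (j + P.natDegree), n ^ (N - 1 - i) *
      (if j ≤ i ∧ i ≤ j + P.natDegree then P.coeff (P.natDegree + j - i) else 0)
      = ∑ k ∈ Finset.range (P.natDegree + 1),
        n ^ (N - 1 - (j + P.natDegree)) * (P.coeff k * n ^ k) := by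
    apply Finset.sum_nbij' (i := fun i => P.natDegree + j - i) (j := fun k => P.natDegree + j - k)
    · intro a ha; rw [Finset.mem_Icc] at ha; rw [Finset.mem_range]; omega
    · intro a ha; rw [Finset.mem_range] at ha; rw [Finset.mem_Icc]; omega
    · intro a ha; rw [Finset.mem_Icc] at ha; omega
    · intro a ha; rw [Finset.mem_range] at ha; omega
    · intro a ha
      rw [Finset.mem_Icc] at ha
      rw [if_pos (by omega)]
      have he : N - 1 - a = (N - 1 - (j + P.natDegree)) + (P.natDegree + j - a) := by omega
      rw [he, pow_add]
      ring
  rw [h2, ← Finset.mul_sum, eval_eq_sum_range]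

lemma resultant_mem (A B : Polynomial ℤ) (hN : 0 < A.natDegree + B.natDegree) (n : ℤ) :
    _root_.resultant A B ∈ Ideal.span {A.eval n, B.eval n} := by
  classical
  set M := sylvesterMatrix A B with hM
  let v : Fin (A.natDegree + B.natDegree) → ℤ :=
    fun i => n ^ (A.natDegree + B.natDegree - 1 - (i : ℕ))
  let last : Fin (A.natDegree + B.natDegree) := ⟨A.natDegree + B.natDegree - 1, by omega⟩
  have hrow : ∀ j : Fin (A.natDegree + B.natDegree),
      Matrix.vecMul v M j =
        if (j : ℕ) < B.natDegree then
          n ^ (A.natDegree + B.natDegree - 1 - ((j : ℕ) + A.natDegree)) * A.eval n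
        else n ^ (A.natDegree + B.natDegree - 1 - (j : ℕ)) * B.eval n := by
    intro j
    have hvm : Matrix.vecMul v M j = ∑ i : Fin (A.natDegree + B.natDegree),
        n ^ (A.natDegree + B.natDegree - 1 - (i : ℕ)) * M i j := by
      simp [Matrix.vecMul, dotProduct, v]
    rw [hvm]
    by_cases hj : (j : ℕ) < B.natDegree
    · rw [if_pos hj]
      have : ∀ i : Fin (A.natDegree + B.natDegree),
          n ^ (A.natDegree + B.natDegree - 1 - (i : ℕ)) * M i j
          = (fun i : ℕ => n ^ (A.natDegree + B.natDegree - 1 - i) *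
              (if (j : ℕ) ≤ i ∧ i ≤ (j : ℕ) + A.natDegree then
                A.coeff (A.natDegree + (j : ℕ) - i) else 0)) (i : ℕ) := by
        intro i
        simp only [hM, sylvesterMatrix, Matrix.of_apply, if_pos hj]
      rw [Finset.sum_congr rfl (fun i _ => this i),
        Fin.sum_univ_eq_sum_range (fun i : ℕ => n ^ (A.natDegree + B.natDegree - 1 - i) *
              (if (j : ℕ) ≤ i ∧ i ≤ (j : ℕ) + A.natDegree then
                A.coeff (A.natDegree + (j : ℕ) - i) else 0)) (A.natDegree + B.natDegree)]
      exact sum_key A n _ _ (by omega)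
    · rw [if_neg hj]
      push_neg at hj
      have : ∀ i : Fin (A.natDegree + B.natDegree),
          n ^ (A.natDegree + B.natDegree - 1 - (i : ℕ)) * M i j
          = (fun i : ℕ => n ^ (A.natDegree + B.natDegree - 1 - i) *
              (if (j : ℕ) - B.natDegree ≤ i ∧ i ≤ ((j : ℕ) - B.natDegree) + B.natDegree then
                B.coeff (B.natDegree + ((j : ℕ) - B.natDegree) - i) else 0)) (i : ℕ) := by
        intro i
        simp only [hM, sylvesterMatrix, Matrix.of_apply, if_neg (not_lt.mpr hj)]
        by_cases hc : (j : ℕ) - B.natDegree ≤ (i : ℕ) ∧ (i : ℕ) ≤ (j : ℕ)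
        · rw [if_pos hc, if_pos ⟨hc.1, by omega⟩]
          congr 2
          omega
        · rw [if_neg hc, if_neg (by rintro ⟨h1, h2⟩; exact hc ⟨h1, by omega⟩)]
      rw [Finset.sum_congr rfl (fun i _ => this i),
        Fin.sum_univ_eq_sum_range (fun i : ℕ => n ^ (A.natDegree + B.natDegree - 1 - i) *
              (if (j : ℕ) - B.natDegree ≤ i ∧ i ≤ ((j : ℕ) - B.natDegree) + B.natDegree then
                B.coeff (B.natDegree + ((j : ℕ) - B.natDegree) - i) else 0))
          (A.natDegree + B.natDegree),
        sum_key B n (A.natDegree + B.natDegree) ((j : ℕ) - B.natDegree) (by omega)]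
      congr 2
      omega
  have h1 : Matrix.vecMul (Matrix.vecMul v M) M.adjugate last = _root_.resultant A B := by
    rw [Matrix.vecMul_vecMul, Matrix.mul_adjugate]
    show ∑ i, v i * (M.det • (1 : Matrix _ _ ℤ)) i last = _
    simp only [Matrix.smul_apply, Matrix.one_apply, smul_eq_mul, mul_ite, mul_one, mul_zero]
    rw [Finset.sum_ite_eq' Finset.univ last (fun i => v i * M.det)]
    simp [v, last, _root_.resultant, hM]
  rw [← h1]
  have h2 : Matrix.vecMul (Matrix.vecMul v M) M.adjugate last
      = ∑ j, Matrix.vecMul v M j * M.adjugate j last := by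
    simp [Matrix.vecMul, dotProduct]
  rw [h2]
  apply Ideal.sum_mem
  intro j _
  rw [hrow j]
  split_ifs
  · exact Ideal.mul_mem_right _ _ (Ideal.mul_mem_left _ _
      (Ideal.subset_span (Set.mem_insert _ _)))
  · exact Ideal.mul_mem_right _ _ (Ideal.mul_mem_left _ _
      (Ideal.subset_span (Set.mem_insert_of_mem _ rfl)))

theorem gcd_eval_periodic_resultant (A B : Polynomial ℤ)
    (hcop : IsCoprime (A.map (Int.castRingHom ℚ)) (B.map (Int.castRingHom ℚ))) :
    ∀ n : ℤ, Int.gcd (A.eval (n + _root_.resultant A B)) (B.eval (n + _root_.resultant A B)) =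
      Int.gcd (A.eval n) (B.eval n) := by
  intro n
  by_cases hN : 0 < A.natDegree + B.natDegree
  · -- general case
    have key : ∀ m : ℤ, ∃ u w : ℤ, u * A.eval m + w * B.eval m = _root_.resultant A B := by
      intro m
      have := resultant_mem A B hN m
      rwa [Ideal.mem_span_pair] at this
    have dvd_res : ∀ m : ℤ, (Int.gcd (A.eval m) (B.eval m) : ℤ) ∣ _root_.resultant A B := by
      intro m
      obtain ⟨u, w, huw⟩ := key m
      rw [← huw]
      exact dvd_add (Dvd.dvd.mul_left (Int.gcd_dvd_left _ _) u)
        (Dvd.dvd.mul_left (Int.gcd_dvd_right _ _) w)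
    have step : ∀ a b : ℤ, (Int.gcd (A.eval a) (B.eval a) : ℤ) ∣ b - a →
        Int.gcd (A.eval a) (B.eval a) ∣ Int.gcd (A.eval b) (B.eval b) := by
      intro a b hab
      rw [← Int.natCast_dvd_natCast]
      apply Int.dvd_coe_gcd
      · have h := sub_dvd_eval_sub b a A
        have : (Int.gcd (A.eval a) (B.eval a) : ℤ) ∣ A.eval b - A.eval a :=
          dvd_trans hab h
        have := dvd_add this (Int.gcd_dvd_left (a := A.eval a) (b := B.eval a))
        simpa using this
      · have h := sub_dvd_eval_sub b a B
        have : (Int.gcd (A.eval a) (B.eval a) : ℤ) ∣ B.eval b - B.eval a :=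
          dvd_trans hab h
        have := dvd_add this (Int.gcd_dvd_right (a := A.eval a) (b := B.eval a))
        simpa using this
    apply Nat.dvd_antisymm
    · apply step
      have := dvd_res (n + _root_.resultant A B)
      simpa using this.neg_right
    · apply step
      simpa using dvd_res n
  · -- both constant
    push_neg at hN
    have hA : A.natDegree = 0 := by omega
    have hB : B.natDegree = 0 := by omega
    obtain ⟨a, ha⟩ := natDegree_eq_zero.mp hA
    obtain ⟨b, hb⟩ := natDegree_eq_zero.mp hB
    rw [← ha, ← hb]
    simp
end

section
/- Let A, B ∈ ℤ[x] be coprime in ℚ[x] with resultant Δ and G(n) = gcd(A(n), B(n)). Given finitely many primes p_1, ..., p_ℓ dividing Δ and integers n_1, ..., n_ℓ, there exists an integer n such that for every i, the largest power of p_i dividing G(n) equals the largest power of p_i dividing G(n_i). -/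
open Polynomial

theorem patterns_realized (A B : Polynomial ℤ)
    (hcop : IsCoprime (A.map (Int.castRingHom ℚ)) (B.map (Int.castRingHom ℚ)))
    (ℓ : ℕ) (p : Fin ℓ → ℕ) (hp : ∀ i, (p i).Prime)
    (hdist : Function.Injective p)
    (hdvd : ∀ i, (p i : ℤ) ∣ _root_.resultant A B)
    (N : Fin ℓ → ℤ) :
    ∃ n : ℤ, ∀ i,
      (p i) ^ padicValNat (p i) (Int.gcd (A.eval n) (B.eval n)) =
      (p i) ^ padicValNat (p i) (Int.gcd (A.eval (N i)) (B.eval (N i))) := by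
  classical
  -- gcd never vanishes
  have hg : ∀ m : ℤ, Int.gcd (A.eval m) (B.eval m) ≠ 0 := by
    intro m hm
    rw [Int.gcd_eq_zero_iff] at hm
    obtain ⟨u, v, huv⟩ := hcop
    have h1 := congrArg (Polynomial.eval ((m : ℤ) : ℚ)) huv
    simp [Polynomial.eval_intCast_map, hm.1, hm.2] at h1
  -- valuations at the target points
  set v : Fin ℓ → ℕ := fun i =>
    padicValNat (p i) (Int.gcd (A.eval (N i)) (B.eval (N i))) with hv
  -- CRT
  have hcp : Pairwise fun i j =>
      IsCoprime (Ideal.span {((p i : ℤ) ^ (v i + 1))} : Ideal ℤ)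
        (Ideal.span {((p j : ℤ) ^ (v j + 1))}) := by
    intro i j hij
    rw [Ideal.isCoprime_span_singleton_iff]
    exact (Int.isCoprime_iff_gcd_eq_one.mpr (by
      simpa [Int.gcd_natCast_natCast] using
        (Nat.coprime_primes (hp i) (hp j)).mpr fun h => hij (hdist h))).pow
  obtain ⟨n, hn⟩ := Ideal.pi_quotient_surjective hcp
    (fun i => Ideal.Quotient.mk _ (N i))
  refine ⟨n, fun i => ?_⟩
  have : Fact (p i).Prime := ⟨hp i⟩
  congr 1
  -- the congruence mod p_i^(v_i+1)
  have hmod : ((p i : ℤ) ^ (v i + 1)) ∣ n - N i := by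
    have := hn i
    rwa [Ideal.Quotient.eq, Ideal.mem_span_singleton] at this
  have hA : ((p i : ℤ) ^ (v i + 1)) ∣ A.eval n - A.eval (N i) :=
    dvd_trans hmod (Polynomial.sub_dvd_eval_sub n (N i) A)
  have hB : ((p i : ℤ) ^ (v i + 1)) ∣ B.eval n - B.eval (N i) :=
    dvd_trans hmod (Polynomial.sub_dvd_eval_sub n (N i) B)
  -- p^(v i) divides gcd at N i, hence both values
  have hgNi := hg (N i)
  have hdvdg : (p i) ^ (v i) ∣ Int.gcd (A.eval (N i)) (B.eval (N i)) :=
    pow_padicValNat_dvd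
  have hAN : ((p i : ℤ)) ^ (v i) ∣ A.eval (N i) := by
    have := Int.gcd_dvd_left (a := A.eval (N i)) (b := B.eval (N i))
    exact_mod_cast dvd_trans (by exact_mod_cast hdvdg) this
  have hBN : ((p i : ℤ)) ^ (v i) ∣ B.eval (N i) := by
    have := Int.gcd_dvd_right (a := A.eval (N i)) (b := B.eval (N i))
    exact_mod_cast dvd_trans (by exact_mod_cast hdvdg) this
  have hstep : ((p i : ℤ)) ^ (v i) ∣ (p i : ℤ) ^ (v i + 1) :=
    pow_dvd_pow _ (Nat.le_succ _)
  have hAn : ((p i : ℤ)) ^ (v i) ∣ A.eval n := by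
    have := dvd_add (hstep.trans hA) hAN
    simpa using this
  have hBn : ((p i : ℤ)) ^ (v i) ∣ B.eval n := by
    have := dvd_add (hstep.trans hB) hBN
    simpa using this
  have hlow : (p i) ^ (v i) ∣ Int.gcd (A.eval n) (B.eval n) := by
    have := Int.dvd_gcd hAn hBn
    exact_mod_cast this
  have hhigh : ¬ (p i) ^ (v i + 1) ∣ Int.gcd (A.eval n) (B.eval n) := by
    intro hcon
    have hconZ : ((p i : ℤ)) ^ (v i + 1) ∣ (Int.gcd (A.eval n) (B.eval n) : ℤ) := by
      exact_mod_cast hcon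
    have hAn' : ((p i : ℤ)) ^ (v i + 1) ∣ A.eval (N i) := by
      have := dvd_sub (hconZ.trans (Int.gcd_dvd_left _ _)) hA
      simpa using this
    have hBn' : ((p i : ℤ)) ^ (v i + 1) ∣ B.eval (N i) := by
      have := dvd_sub (hconZ.trans (Int.gcd_dvd_right _ _)) hB
      simpa using this
    have : (p i) ^ (v i + 1) ∣ Int.gcd (A.eval (N i)) (B.eval (N i)) := by
      exact_mod_cast Int.dvd_gcd hAn' hBn'
    exact pow_succ_padicValNat_not_dvd hgNi this
  -- conclude
  have h1 : v i ≤ padicValNat (p i) (Int.gcd (A.eval n) (B.eval n)) :=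
    (padicValNat_dvd_iff_le (hg n)).mp hlow
  have h2 : ¬ (v i + 1 ≤ padicValNat (p i) (Int.gcd (A.eval n) (B.eval n))) :=
    fun h => hhigh ((padicValNat_dvd_iff_le (hg n)).mpr h)
  have h3 : padicValNat (p i) (Int.gcd (A.eval n) (B.eval n)) = v i := by omega
  exact h3
end

section
/- Let A, B ∈ ℤ[x] be coprime monic polynomials of degrees d and e, with resultant Δ, and let G(n) = gcd(A(n), B(n)). If integers q_1, ..., q_ℓ with ℓ ≤ d + e satisfy q_i ∣ G(n_i) for integers n_1, ..., n_ℓ, then the product q_1 q_2 ⋯ q_ℓ divides Δ · ∏_{1 ≤ i < j ≤ ℓ} (n_j − n_i). -/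
open Polynomial

lemma aux_det_dvd {N : ℕ} (M : Matrix (Fin N) (Fin N) ℤ) (g : Fin N → ℤ)
    (h : ∀ i j, g i ∣ M i j) : (∏ i, g i) ∣ M.det := by
  rw [Matrix.det_apply]
  refine Finset.dvd_sum fun σ _ => ?_
  have h1 : (∏ i, g i) ∣ ∏ i, M (σ i) i := by
    rw [← Equiv.prod_comp σ g]
    exact Finset.prod_dvd_prod_of_dvd _ _ fun i _ => h (σ i) i
  rw [Units.smul_def, zsmul_eq_mul]
  exact h1.mul_left _

set_option linter.unreachableTactic false in
set_option linter.unusedTactic false in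
lemma aux_sum (d e : ℕ) (a b : ℕ → ℤ) (x : ℤ) (j : ℕ) (hj : j < d + e) :
    (∑ k ∈ Finset.range (d + e),
        x ^ (d + e - 1 - k) *
          (if j < e then (if j ≤ k ∧ k ≤ j + d then a (d + j - k) else 0)
           else (if j - e ≤ k ∧ k ≤ j then b (j - k) else 0))) =
    if j < e then x ^ (e - 1 - j) * (∑ s ∈ Finset.range (d + 1), a s * x ^ s)
    else x ^ (d + e - 1 - j) * (∑ s ∈ Finset.range (e + 1), b s * x ^ s) := by
  by_cases hcase : j < e
  · simp only [if_pos hcase]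
    rw [Finset.mul_sum]
    simp_rw [mul_ite, mul_zero, ← Finset.sum_filter]
    refine Finset.sum_nbij' (fun k => d + j - k) (fun s => d + j - s) ?_ ?_ ?_ ?_ ?_
    · intro k hk
      simp only [Finset.mem_filter, Finset.mem_range] at hk ⊢
      first | omega | (dsimp only; omega)
    · intro s hs
      simp only [Finset.mem_filter, Finset.mem_range] at hs ⊢
      first | omega | (dsimp only; omega)
    · intro k hk
      simp only [Finset.mem_filter, Finset.mem_range] at hk
      first | omega | (dsimp only; omega)
    · intro s hs
      simp only [Finset.mem_range] at hs
      first | omega | (dsimp only; omega)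
    · intro k hk
      simp only [Finset.mem_filter, Finset.mem_range] at hk
      have h1 : d + e - 1 - k = (e - 1 - j) + (d + j - k) := by omega
      rw [h1, pow_add]
      ring
  · simp only [if_neg hcase]
    rw [Finset.mul_sum]
    simp_rw [mul_ite, mul_zero, ← Finset.sum_filter]
    refine Finset.sum_nbij' (fun k => j - k) (fun s => j - s) ?_ ?_ ?_ ?_ ?_
    · intro k hk
      simp only [Finset.mem_filter, Finset.mem_range] at hk ⊢
      first | omega | (dsimp only; omega)
    · intro s hs
      simp only [Finset.mem_filter, Finset.mem_range] at hs ⊢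
      first | omega | (dsimp only; omega)
    · intro k hk
      simp only [Finset.mem_filter, Finset.mem_range] at hk
      first | omega | (dsimp only; omega)
    · intro s hs
      simp only [Finset.mem_range] at hs
      first | omega | (dsimp only; omega)
    · intro k hk
      simp only [Finset.mem_filter, Finset.mem_range] at hk
      have h1 : d + e - 1 - k = (d + e - 1 - j) + (j - k) := by omega
      rw [h1, pow_add]
      ring

/-- extension of a `Fin ℓ`-indexed family to `ℕ`. -/
def auxExt (ℓ : ℕ) (n : Fin ℓ → ℤ) (z : ℤ) : ℕ → ℤ :=
  fun t => if h : t < ℓ then n ⟨t, h⟩ else z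

/-- the padded (reversed) Vandermonde matrix. -/
noncomputable def auxV (N m ℓ : ℕ) (n : Fin ℓ → ℤ) : Matrix (Fin N) (Fin N) ℤ :=
  Matrix.of fun i j =>
    if (i : ℕ) < m then (if (j : ℕ) = (i : ℕ) then 1 else 0)
    else auxExt ℓ n 0 ((i : ℕ) - m) ^ (N - 1 - (j : ℕ))

theorem prod_dvd_resultant_mul_vandermonde (A B : Polynomial ℤ)
    (hA : A.Monic) (hB : B.Monic)
    (hcop : IsCoprime (A.map (Int.castRingHom ℚ)) (B.map (Int.castRingHom ℚ)))
    (ℓ : ℕ) (hℓ : ℓ ≤ A.natDegree + B.natDegree)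
    (q : Fin ℓ → ℤ) (n : Fin ℓ → ℤ)
    (hq : ∀ i, q i ∣ (Int.gcd (A.eval (n i)) (B.eval (n i)) : ℤ)) :
    (∏ i, q i) ∣
      _root_.resultant A B * ∏ i, ∏ j ∈ Finset.univ.filter (fun j => i < j), (n j - n i) := by
  classical
  obtain ⟨m, hm⟩ : ∃ m, m + ℓ = A.natDegree + B.natDegree :=
    ⟨A.natDegree + B.natDegree - ℓ, Nat.sub_add_cancel hℓ⟩
  set N := A.natDegree + B.natDegree with hN
  set S := sylvesterMatrix A B with hSdef
  set V := auxV N m ℓ n with hVdef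
  set n' := auxExt ℓ n 0 with hn'
  set q' := auxExt ℓ q 1 with hq'
  -- row identity
  have hrow : ∀ (x : ℤ) (j : Fin N),
      (∑ k : Fin N, x ^ (N - 1 - (k : ℕ)) * S k j) =
      if (j : ℕ) < B.natDegree then x ^ (B.natDegree - 1 - (j : ℕ)) * A.eval x
      else x ^ (N - 1 - (j : ℕ)) * B.eval x := by
    intro x j
    have hj : (j : ℕ) < A.natDegree + B.natDegree := j.isLt
    have h := aux_sum A.natDegree B.natDegree A.coeff B.coeff x (j : ℕ) hj
    rw [← Polynomial.eval_eq_sum_range, ← Polynomial.eval_eq_sum_range] at h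
    rw [← h]
    exact Fin.sum_univ_eq_sum_range
      (fun k => x ^ (A.natDegree + B.natDegree - 1 - k) *
        (if (j : ℕ) < B.natDegree then
          (if (j : ℕ) ≤ k ∧ k ≤ (j : ℕ) + A.natDegree then
            A.coeff (A.natDegree + (j : ℕ) - k) else 0)
         else (if (j : ℕ) - B.natDegree ≤ k ∧ k ≤ (j : ℕ) then
            B.coeff ((j : ℕ) - k) else 0))) N
  -- row divisibility
  set g : Fin N → ℤ := fun i => if (i : ℕ) < m then 1 else q' ((i : ℕ) - m) with hg
  have hqn : ∀ t (h : t < ℓ), q' t ∣ A.eval (n' t) ∧ q' t ∣ B.eval (n' t) := by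
    intro t h
    have hqt : q' t = q ⟨t, h⟩ := by simp [hq', auxExt, h]
    have hnt : n' t = n ⟨t, h⟩ := by simp [hn', auxExt, h]
    rw [hqt, hnt]
    exact ⟨(hq _).trans (Int.gcd_dvd_left _ _), (hq _).trans (Int.gcd_dvd_right _ _)⟩
  have hdvd : ∀ i j, g i ∣ (V * S) i j := by
    intro i j
    by_cases hi : (i : ℕ) < m
    · simp [hg, hi]
    · have hVi : ∀ k : Fin N, V i k = n' ((i : ℕ) - m) ^ (N - 1 - (k : ℕ)) := by
        intro k
        simp [hVdef, auxV, hi, hn']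
      have : (V * S) i j = ∑ k : Fin N, n' ((i : ℕ) - m) ^ (N - 1 - (k : ℕ)) * S k j := by
        rw [Matrix.mul_apply]
        exact Finset.sum_congr rfl fun k _ => by rw [hVi k]
      rw [this, hrow]
      have ht : (i : ℕ) - m < ℓ := by have := i.isLt; omega
      have hgi : g i = q' ((i : ℕ) - m) := by simp [hg, hi]
      rw [hgi]
      obtain ⟨h1, h2⟩ := hqn ((i : ℕ) - m) ht
      split
      · exact h1.mul_left _
      · exact h2.mul_left _
  -- the product of the g's
  set ee : Fin m ⊕ Fin ℓ ≃ Fin N := finSumFinEquiv.trans (finCongr hm) with hee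
  have eeL : ∀ a : Fin m, ((ee (Sum.inl a) : Fin N) : ℕ) = (a : ℕ) := by
    intro a; simp [hee]
  have eeR : ∀ b : Fin ℓ, ((ee (Sum.inr b) : Fin N) : ℕ) = m + (b : ℕ) := by
    intro b; simp [hee]
  have hprod : (∏ i, g i) = ∏ i, q i := by
    rw [← Equiv.prod_comp ee g, Fintype.prod_sum_type]
    have h1 : ∀ a : Fin m, g (ee (Sum.inl a)) = 1 := by
      intro a; simp [hg, eeL a, a.isLt]
    have h2 : ∀ b : Fin ℓ, g (ee (Sum.inr b)) = q b := by
      intro b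
      rw [hg]
      simp only [eeR b]
      rw [if_neg (by omega)]
      simp [hq', auxExt, Nat.add_sub_cancel_left, b.isLt]
    rw [Finset.prod_congr rfl fun a _ => h1 a, Finset.prod_congr rfl fun b _ => h2 b]
    simp
  -- determinant of V
  have hdetV : V.det = (Equiv.Perm.sign (Fin.revPerm (n := ℓ)) : ℤ) *
      ∏ i : Fin ℓ, ∏ j ∈ Finset.Ioi i, (n j - n i) := by
    have e1 : V.det = (V.submatrix ee ee).det := (Matrix.det_submatrix_equiv_self ee V).symm
    have e2 : V.submatrix ee ee =
        Matrix.fromBlocks (1 : Matrix (Fin m) (Fin m) ℤ) 0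
          (Matrix.of fun (a : Fin ℓ) (b : Fin m) => n a ^ (N - 1 - (b : ℕ)))
          (Matrix.of fun (a b : Fin ℓ) => n a ^ (ℓ - 1 - (b : ℕ))) := by
      ext x y
      cases x with
      | inl a =>
        cases y with
        | inl b =>
          simp only [Matrix.submatrix_apply, hVdef, auxV, Matrix.of_apply, eeL a, eeL b,
            a.isLt, if_true, Matrix.fromBlocks_apply₁₁, Matrix.one_apply, Fin.val_eq_val,
            Equiv.apply_eq_iff_eq, Sum.inl.injEq]
          by_cases hab : b = a
          · simp [hab]
          · rw [if_neg hab, if_neg (fun h => hab h.symm)]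
        | inr b =>
          have hlt : ¬ ((ee (Sum.inr b) : Fin N) : ℕ) = (a : ℕ) := by
            rw [eeR b]; have := a.isLt; omega
          simp only [Matrix.submatrix_apply, hVdef, auxV, Matrix.of_apply, eeL a,
            a.isLt, if_true, hlt, if_false, Matrix.fromBlocks_apply₁₂, Matrix.zero_apply]
      | inr a =>
        have hge : ¬ (m + (a : ℕ) < m) := by omega
        cases y with
        | inl b =>
          simp only [Matrix.submatrix_apply, hVdef, auxV, Matrix.of_apply, eeR a, eeL b,
            hge, if_false, Nat.add_sub_cancel_left, Matrix.fromBlocks_apply₂₁, hn', auxExt,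
            dif_pos a.isLt, Fin.eta]
        | inr b =>
          have hexp : N - 1 - (m + (b : ℕ)) = ℓ - 1 - (b : ℕ) := by
            have := b.isLt; omega
          simp only [Matrix.submatrix_apply, hVdef, auxV, Matrix.of_apply, eeR a, eeR b,
            hge, if_false, Nat.add_sub_cancel_left, hexp, Matrix.fromBlocks_apply₂₂, hn',
            auxExt, dif_pos a.isLt, Fin.eta]
    have e4 : (Matrix.of fun (a b : Fin ℓ) => n a ^ (ℓ - 1 - (b : ℕ))) =
        (Matrix.vandermonde n).submatrix id ⇑(Fin.revPerm (n := ℓ)) := by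
      ext a b
      simp only [Matrix.of_apply, Matrix.submatrix_apply, id_eq, Matrix.vandermonde_apply,
        Fin.revPerm_apply, Fin.val_rev]
      congr 1
      omega
    rw [e1, e2, Matrix.det_fromBlocks_zero₁₂, Matrix.det_one, one_mul, e4,
      Matrix.det_permute', Matrix.det_vandermonde]
    norm_cast
  -- assemble
  have key : (∏ i, q i) ∣ V.det * S.det := by
    rw [← Matrix.det_mul, ← hprod]
    exact aux_det_dvd _ g hdvd
  rw [hdetV] at key
  have hIoi : (∏ i, ∏ j ∈ Finset.univ.filter (fun j => i < j), (n j - n i)) =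
      ∏ i : Fin ℓ, ∏ j ∈ Finset.Ioi i, (n j - n i) := by
    refine Finset.prod_congr rfl fun i _ => Finset.prod_congr ?_ fun _ _ => rfl
    ext j; simp
  rw [hIoi]
  have hre : _root_.resultant A B = S.det := rfl
  rw [hre]
  have hrw : ((Equiv.Perm.sign (Fin.revPerm (n := ℓ)) : ℤ) *
      ∏ i : Fin ℓ, ∏ j ∈ Finset.Ioi i, (n j - n i)) * S.det =
      (Equiv.Perm.sign (Fin.revPerm (n := ℓ)) : ℤ) *
        (S.det * ∏ i : Fin ℓ, ∏ j ∈ Finset.Ioi i, (n j - n i)) := by ring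
  rw [hrw] at key
  rcases Int.units_eq_one_or (Equiv.Perm.sign (Fin.revPerm (n := ℓ))) with h | h <;>
    rw [h] at key <;> simpa using key
end

section
/- Let A, B ∈ ℤ[x] be coprime monic polynomials with resultant Δ, and let p be a prime with ν_p(Δ) = 1. Then there is a residue class r mod p such that for all integers n: p divides gcd(A(n), B(n)) if and only if n ≡ r (mod p), and moreover p² never divides gcd(A(n), B(n)). -/
open Polynomial

section AuxSylv
open Finset
variable {R : Type*} [CommRing R]


noncomputable def sylv (d e : ℕ) (a b : R[X]) :
    Matrix (Fin (d + e)) (Fin (d + e)) R :=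
  Matrix.of fun i j =>
    if (j : ℕ) < e then
      if (j : ℕ) ≤ (i : ℕ) ∧ (i : ℕ) ≤ (j : ℕ) + d then
        a.coeff (d + (j : ℕ) - (i : ℕ)) else 0
    else
      if (j : ℕ) - e ≤ (i : ℕ) ∧ (i : ℕ) ≤ (j : ℕ) then
        b.coeff ((j : ℕ) - (i : ℕ)) else 0

noncomputable def vecOf (d e : ℕ) (U V : R[X]) : Fin (d + e) → R :=
  fun j => if (j : ℕ) < e then U.coeff (e - 1 - (j : ℕ)) else V.coeff (d - 1 - ((j : ℕ) - e))

lemma sum_coeff_mul_aux (a U : R[X]) (e K : ℕ) (hU : U.degree < (e : ℕ)) :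
    ∑ m ∈ range e, U.coeff m * (a * X ^ m).coeff K = (U * a).coeff K := by
  by_cases hU0 : U = 0
  · simp [hU0]
  have hnd : U.natDegree < e := by
    rwa [← natDegree_lt_iff_degree_lt hU0] at hU
  rw [mul_comm U a]
  conv_rhs => rw [U.as_sum_range' e hnd]
  rw [mul_sum, finset_sum_coeff]
  refine Finset.sum_congr rfl fun m _ => ?_
  rw [← C_mul_X_pow_eq_monomial, mul_left_comm a (C (U.coeff m)) (X ^ m), coeff_C_mul, mul_comm a (X ^ m), ← mul_comm a (X ^ m)]

-- column lemma for the `a` part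
lemma colA (d e : ℕ) (a : R[X]) (ha : a.natDegree ≤ d) (i j : ℕ)
    (hi : i < d + e) (hj : j < e) :
    (if j ≤ i ∧ i ≤ j + d then a.coeff (d + j - i) else 0)
      = (a * X ^ (e - 1 - j)).coeff (d + e - 1 - i) := by
  rw [coeff_mul_X_pow']
  by_cases h1 : i ≤ j + d
  · by_cases h2 : j ≤ i
    · rw [if_pos ⟨h2, h1⟩, if_pos (by omega)]
      congr 1
      omega
    · rw [if_neg (by tauto), if_pos (by omega)]
      refine (coeff_eq_zero_of_natDegree_lt ?_).symm
      omega
  · rw [if_neg (by tauto), if_neg (by omega)]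

lemma colB (d e : ℕ) (b : R[X]) (hb : b.natDegree ≤ e) (i j : ℕ)
    (hi : i < d + e) (hj : j < d) :
    (if j ≤ i ∧ i ≤ e + j then b.coeff (e + j - i) else 0)
      = (b * X ^ (d - 1 - j)).coeff (d + e - 1 - i) := by
  rw [coeff_mul_X_pow']
  by_cases h1 : i ≤ e + j
  · by_cases h2 : j ≤ i
    · rw [if_pos ⟨h2, h1⟩, if_pos (by omega)]
      congr 1
      omega
    · rw [if_neg (by tauto), if_pos (by omega)]
      refine (coeff_eq_zero_of_natDegree_lt ?_).symm
      omega
  · rw [if_neg (by tauto), if_neg (by omega)]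

lemma sylv_mulVec (d e : ℕ) (a b U V : R[X])
    (ha : a.natDegree ≤ d) (hb : b.natDegree ≤ e)
    (hU : U.degree < (e : ℕ)) (hV : V.degree < (d : ℕ)) (i : Fin (d + e)) :
    (sylv d e a b).mulVec (vecOf d e U V) i = (U * a + V * b).coeff (d + e - 1 - (i : ℕ)) := by
  have hi : (i : ℕ) < d + e := i.isLt
  rw [Matrix.mulVec, dotProduct]
  have key : ∀ j : Fin (d + e), sylv d e a b i j * vecOf d e U V j =
      (fun j : ℕ => if j < e then (a * X ^ (e - 1 - j)).coeff (d + e - 1 - (i : ℕ)) * U.coeff (e - 1 - j)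
        else (b * X ^ (d - 1 - (j - e))).coeff (d + e - 1 - (i : ℕ)) * V.coeff (d - 1 - (j - e))) (j : ℕ) := by
    intro j
    simp only [sylv, vecOf, Matrix.of_apply]
    by_cases hj : (j : ℕ) < e
    · rw [if_pos hj, if_pos hj, if_pos hj, ← colA d e a ha i j hi hj]
    · rw [if_neg hj, if_neg hj, if_neg hj]
      push_neg at hj
      have hj' : (j : ℕ) - e < d := by omega
      have : (j : ℕ) - e ≤ (i : ℕ) ∧ (i : ℕ) ≤ (j : ℕ) ↔ ((j : ℕ) - e) ≤ (i : ℕ) ∧ (i : ℕ) ≤ e + ((j : ℕ) - e) := by omega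
      rw [← colB d e b hb i ((j : ℕ) - e) hi hj']
      congr 1
      · rw [if_congr this rfl rfl]
        congr 2
        omega
  set K := d + e - 1 - (i : ℕ) with hK
  set g : ℕ → R := fun j => if j < e then (a * X ^ (e - 1 - j)).coeff K * U.coeff (e - 1 - j)
        else (b * X ^ (d - 1 - (j - e))).coeff K * V.coeff (d - 1 - (j - e)) with hg
  have key2 : ∀ j : Fin (d + e), sylv d e a b i j * vecOf d e U V j = g (j : ℕ) := key
  rw [Finset.sum_congr rfl (fun j _ => key2 j), Fin.sum_univ_eq_sum_range g (d + e)]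
  have hsplit : ∑ j ∈ range (d + e), g j = (∑ j ∈ range e, g j) + ∑ j ∈ range d, g (e + j) := by
    rw [add_comm d e, Finset.range_add, Finset.sum_union, Finset.sum_map]
    · rfl
    · simp only [Finset.disjoint_left, Finset.mem_range, Finset.mem_map, addLeftEmbedding_apply]
      rintro x hx ⟨y, hy, rfl⟩
      omega
  rw [hsplit, coeff_add]
  congr 1
  · have h1 : ∀ j ∈ range e, g j = (a * X ^ (e - 1 - j)).coeff K * U.coeff (e - 1 - j) := by
      intro j hj
      simp only [Finset.mem_range] at hj
      simp only [hg]
      rw [if_pos hj]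
    rw [Finset.sum_congr rfl h1]
    exact (Finset.sum_range_reflect (fun m => (a * X ^ m).coeff K * U.coeff m) e).trans
      ((Finset.sum_congr rfl fun m _ => mul_comm _ _).trans (sum_coeff_mul_aux a U e K hU))
  · have h1 : ∀ j ∈ range d, g (e + j) = (b * X ^ (d - 1 - j)).coeff K * V.coeff (d - 1 - j) := by
      intro j hj
      simp only [Finset.mem_range] at hj
      simp only [hg, Nat.add_sub_cancel_left]
      rw [if_neg (by omega)]
    rw [Finset.sum_congr rfl h1]
    exact (Finset.sum_range_reflect (fun m => (b * X ^ m).coeff K * V.coeff m) d).trans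
      ((Finset.sum_congr rfl fun m _ => mul_comm _ _).trans (sum_coeff_mul_aux b V d K hV))




noncomputable def UofVec (d e : ℕ) (w : Fin (d + e) → R) : R[X] :=
  ∑ j : Fin (d + e), if (j : ℕ) < e then monomial (e - 1 - (j : ℕ)) (w j) else 0

noncomputable def VofVec (d e : ℕ) (w : Fin (d + e) → R) : R[X] :=
  ∑ j : Fin (d + e), if e ≤ (j : ℕ) then monomial (d - 1 - ((j : ℕ) - e)) (w j) else 0

lemma UofVec_degree (d e : ℕ) (w : Fin (d + e) → R) : (UofVec d e w).degree < (e : ℕ) := by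
  refine lt_of_le_of_lt (degree_sum_le _ _) ?_
  rw [Finset.sup_lt_iff (by exact_mod_cast WithBot.bot_lt_coe e)]
  intro j _
  by_cases hj : (j : ℕ) < e
  · rw [if_pos hj]
    refine lt_of_le_of_lt (degree_monomial_le _ _) ?_
    have hlt : e - 1 - (j : ℕ) < e := by omega
    exact_mod_cast hlt
  · rw [if_neg hj]
    exact (by exact_mod_cast WithBot.bot_lt_coe e : (⊥ : WithBot ℕ) < (e : ℕ))

lemma VofVec_degree (d e : ℕ) (w : Fin (d + e) → R) : (VofVec d e w).degree < (d : ℕ) := by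
  refine lt_of_le_of_lt (degree_sum_le _ _) ?_
  rw [Finset.sup_lt_iff (by exact_mod_cast WithBot.bot_lt_coe d)]
  intro j _
  by_cases hj : e ≤ (j : ℕ)
  · rw [if_pos hj]
    refine lt_of_le_of_lt (degree_monomial_le _ _) ?_
    have h2 : (j : ℕ) < d + e := j.isLt
    have hlt : d - 1 - ((j : ℕ) - e) < d := by omega
    exact_mod_cast hlt
  · rw [if_neg hj]
    exact (by exact_mod_cast WithBot.bot_lt_coe d : (⊥ : WithBot ℕ) < (d : ℕ))

lemma vecOf_ofVec (d e : ℕ) (w : Fin (d + e) → R) :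
    vecOf d e (UofVec d e w) (VofVec d e w) = w := by
  funext j
  have hj2 : (j : ℕ) < d + e := j.isLt
  unfold vecOf UofVec VofVec
  by_cases hj : (j : ℕ) < e
  · rw [if_pos hj, finset_sum_coeff]
    rw [Finset.sum_eq_single j]
    · rw [if_pos hj, coeff_monomial, if_pos rfl]
    · intro j' _ hne
      by_cases hj' : (j' : ℕ) < e
      · rw [if_pos hj', coeff_monomial, if_neg]
        intro h
        exact hne (Fin.ext (by omega))
      · rw [if_neg hj', coeff_zero]
    · intro h
      exact absurd (Finset.mem_univ j) h
  · rw [if_neg hj, finset_sum_coeff]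
    push_neg at hj
    rw [Finset.sum_eq_single j]
    · rw [if_pos hj, coeff_monomial, if_pos rfl]
    · intro j' _ hne
      by_cases hj' : e ≤ (j' : ℕ)
      · rw [if_pos hj', coeff_monomial, if_neg]
        have hj2' : (j' : ℕ) < d + e := j'.isLt
        intro h
        exact hne (Fin.ext (by omega))
      · rw [if_neg hj', coeff_zero]
    · intro h
      exact absurd (Finset.mem_univ j) h

lemma poly_eq_zero_of_coeffs (P : R[X]) (N : ℕ) (hdeg : P.degree < (N : ℕ))
    (h : ∀ k, k < N → P.coeff k = 0) : P = 0 := by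
  ext k
  by_cases hk : k < N
  · simp [h k hk]
  · rw [coeff_zero]
    exact coeff_eq_zero_of_degree_lt (lt_of_lt_of_le hdeg (by exact_mod_cast Nat.le_of_not_lt hk))

lemma degree_mul_lt_helper (U a : R[X]) (d e : ℕ) (hU : U.degree < (e : ℕ))
    (ha : a.natDegree ≤ d) : (U * a).degree < ((d + e : ℕ) : WithBot ℕ) := by
  refine lt_of_le_of_lt (degree_mul_le _ _) ?_
  by_cases hU0 : U = 0
  · simp [hU0]
  by_cases ha0 : a = 0
  · simp [ha0]
  rw [degree_eq_natDegree hU0, degree_eq_natDegree ha0]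
  have h1 : U.natDegree < e := by rwa [← natDegree_lt_iff_degree_lt hU0] at hU
  have hlt : U.natDegree + a.natDegree < d + e := by omega
  exact_mod_cast hlt

lemma sylvesterMatrix_eq_sylv (A B : Polynomial ℤ) :
    sylvesterMatrix A B = sylv A.natDegree B.natDegree A B := rfl

lemma sylv_map {S : Type*} [CommRing S] (f : R →+* S) (d e : ℕ) (a b : R[X]) :
    (sylv d e a b).map f = sylv d e (a.map f) (b.map f) := by
  ext i j
  simp only [sylv, Matrix.map_apply, Matrix.of_apply, coeff_map, apply_ite f, map_zero]

end AuxSylv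

section AuxDet
open Finset

lemma two_cols_p_dvd_det {N : ℕ} (p : ℕ) (D : Matrix (Fin N) (Fin N) ℤ) (j₀ j₁ : Fin N)
    (hne : j₀ ≠ j₁) (h0 : ∀ i, (p : ℤ) ∣ D i j₀) (h1 : ∀ i, (p : ℤ) ∣ D i j₁) :
    (p : ℤ) ^ 2 ∣ D.det := by
  set u₀ : Fin N → ℤ := fun i => D i j₀ / p with hu₀
  set u₁ : Fin N → ℤ := fun i => D i j₁ / p with hu₁
  have hD : D = ((D.updateCol j₁ ((p : ℤ) • u₁)).updateCol j₀ ((p : ℤ) • u₀)) := by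
    ext i j
    rw [Matrix.updateCol_apply, Matrix.updateCol_apply]
    by_cases hj0 : j = j₀
    · subst hj0
      rw [if_pos rfl]
      exact (Int.mul_ediv_cancel' (h0 i)).symm
    · rw [if_neg hj0]
      by_cases hj1 : j = j₁
      · subst hj1
        rw [if_pos rfl]
        exact (Int.mul_ediv_cancel' (h1 i)).symm
      · rw [if_neg hj1]
  have e1 : D.det = (p : ℤ) * ((D.updateCol j₁ ((p : ℤ) • u₁)).updateCol j₀ u₀).det := by
    conv_lhs => rw [hD]
    rw [Matrix.det_updateCol_smul]
  have e2 : (D.updateCol j₁ ((p : ℤ) • u₁)).updateCol j₀ u₀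
      = ((D.updateCol j₀ u₀).updateCol j₁ ((p : ℤ) • u₁)) := by
    ext i j
    simp only [Matrix.updateCol_apply]
    by_cases hj0 : j = j₀
    · have hj1 : ¬ j = j₁ := fun h => hne (hj0 ▸ h ▸ rfl)
      rw [if_pos hj0, if_neg hj1, if_pos hj0]
    · rw [if_neg hj0]
      by_cases hj1 : j = j₁
      · rw [if_pos hj1, if_pos hj1]
      · rw [if_neg hj1, if_neg hj1, if_neg hj0]
  rw [e1, e2, Matrix.det_updateCol_smul]
  ring_nf
  exact Dvd.intro _ rfl

lemma det_colmat_ne_zero {F : Type*} [Field F] {N : ℕ} (w₁ w₂ : Fin N → F) (j₀ j₁ : Fin N)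
    (hne : j₀ ≠ j₁) (h10 : w₁ j₀ ≠ 0) (h20 : w₂ j₀ = 0) (h21 : w₂ j₁ ≠ 0) :
    (Matrix.of fun i j => if j = j₀ then w₁ i else if j = j₁ then w₂ i
      else if i = j then (1 : F) else 0).det ≠ 0 := by
  set C : Matrix (Fin N) (Fin N) F := Matrix.of fun i j =>
    if j = j₀ then w₁ i else if j = j₁ then w₂ i else if i = j then (1 : F) else 0 with hC
  intro h
  obtain ⟨x, hx0, hx⟩ := (Matrix.exists_mulVec_eq_zero_iff).mpr h
  have hmem : j₁ ∈ Finset.univ.erase j₀ := Finset.mem_erase.mpr ⟨Ne.symm hne, Finset.mem_univ _⟩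
  have hsum : ∀ i : Fin N, C.mulVec x i =
      C i j₀ * x j₀ + (C i j₁ * x j₁ + ∑ j ∈ (Finset.univ.erase j₀).erase j₁, C i j * x j) := by
    intro i
    rw [Matrix.mulVec, dotProduct,
      ← Finset.add_sum_erase _ _ (Finset.mem_univ j₀), ← Finset.add_sum_erase _ _ hmem]
  have hCval : ∀ i j, j ≠ j₀ → j ≠ j₁ → C i j = if i = j then (1 : F) else 0 := by
    intro i j h0 h1
    rw [hC]
    simp only [Matrix.of_apply, if_neg h0, if_neg h1]
  have hrest : ∀ i : Fin N, i ≠ j₀ → i ≠ j₁ →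
      ∑ j ∈ (Finset.univ.erase j₀).erase j₁, C i j * x j = x i := by
    intro i h0 h1
    rw [Finset.sum_eq_single i]
    · rw [hCval i i h0 h1, if_pos rfl, one_mul]
    · intro j hj hne'
      have hj1 := (Finset.mem_erase.mp hj).1
      have hj0 := (Finset.mem_erase.mp (Finset.mem_erase.mp hj).2).1
      rw [hCval i j hj0 hj1, if_neg (fun hh => hne' hh.symm), zero_mul]
    · intro hmem'
      exact absurd (Finset.mem_erase.mpr ⟨h1, Finset.mem_erase.mpr ⟨h0, Finset.mem_univ _⟩⟩) hmem'
  have hrest0 : ∀ i : Fin N, (i = j₀ ∨ i = j₁) →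
      ∑ j ∈ (Finset.univ.erase j₀).erase j₁, C i j * x j = 0 := by
    intro i hi
    refine Finset.sum_eq_zero fun j hj => ?_
    have hj1 := (Finset.mem_erase.mp hj).1
    have hj0 := (Finset.mem_erase.mp (Finset.mem_erase.mp hj).2).1
    rw [hCval i j hj0 hj1, if_neg, zero_mul]
    rcases hi with rfl | rfl
    · exact fun hh => hj0 (hh ▸ rfl)
    · exact fun hh => hj1 (hh ▸ rfl)
  have hxj₀ : x j₀ = 0 := by
    have h0 := hsum j₀
    rw [hx, Pi.zero_apply] at h0
    rw [hrest0 j₀ (Or.inl rfl)] at h0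
    have hc1 : C j₀ j₀ = w₁ j₀ := by rw [hC]; simp
    have hc2 : C j₀ j₁ = w₂ j₀ := by
      rw [hC]; simp [Ne.symm hne]
    rw [hc1, hc2, h20, zero_mul, zero_add, add_zero] at h0
    exact (mul_eq_zero.mp h0.symm).resolve_left h10
  have hxj₁ : x j₁ = 0 := by
    have h0 := hsum j₁
    rw [hx, Pi.zero_apply] at h0
    rw [hrest0 j₁ (Or.inr rfl)] at h0
    have hc1 : C j₁ j₀ = w₁ j₁ := by rw [hC]; simp
    have hc2 : C j₁ j₁ = w₂ j₁ := by
      rw [hC]; simp [Ne.symm hne]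
    rw [hc1, hc2, hxj₀, mul_zero, zero_add, add_zero] at h0
    exact (mul_eq_zero.mp h0.symm).resolve_left h21
  apply hx0
  funext i
  by_cases hi0 : i = j₀
  · rw [hi0, hxj₀]; rfl
  by_cases hi1 : i = j₁
  · rw [hi1, hxj₁]; rfl
  have h0 := hsum i
  rw [hx, Pi.zero_apply, hrest i hi0 hi1] at h0
  have hc1 : C i j₀ = w₁ i := by rw [hC]; simp
  have hc2 : C i j₁ = w₂ i := by
    rw [hC]; simp [Ne.symm hne]
  rw [hc1, hc2, hxj₀, hxj₁, mul_zero, mul_zero, zero_add, zero_add] at h0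
  exact h0.symm

lemma cast_mulVec_zmod {N p : ℕ} (M : Matrix (Fin N) (Fin N) ℤ) (v : Fin N → ℤ) (i : Fin N) :
    ((M.mulVec v i : ℤ) : ZMod p)
      = (M.map (Int.cast : ℤ → ZMod p)).mulVec (fun j => ((v j : ℤ) : ZMod p)) i := by
  rw [Matrix.mulVec, dotProduct, Matrix.mulVec, dotProduct]
  push_cast
  rfl

lemma p2_dvd_det_of_two_kernel {N p : ℕ} (hp : p.Prime) (M : Matrix (Fin N) (Fin N) ℤ)
    (w₁ w₂ : Fin N → ZMod p) (j₀ j₁ : Fin N) (hne : j₀ ≠ j₁)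
    (h10 : w₁ j₀ ≠ 0) (h20 : w₂ j₀ = 0) (h21 : w₂ j₁ ≠ 0)
    (hker1 : (M.map (Int.cast : ℤ → ZMod p)).mulVec w₁ = 0)
    (hker2 : (M.map (Int.cast : ℤ → ZMod p)).mulVec w₂ = 0) :
    (p : ℤ) ^ 2 ∣ M.det := by
  haveI : Fact p.Prime := ⟨hp⟩
  set v₁ : Fin N → ℤ := fun i => ((w₁ i).val : ℤ) with hv₁
  set v₂ : Fin N → ℤ := fun i => ((w₂ i).val : ℤ) with hv₂
  have hcast1 : (fun j => ((v₁ j : ℤ) : ZMod p)) = w₁ := by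
    funext j; simp [hv₁, ZMod.natCast_val, ZMod.cast_id]
  have hcast2 : (fun j => ((v₂ j : ℤ) : ZMod p)) = w₂ := by
    funext j; simp [hv₂, ZMod.natCast_val, ZMod.cast_id]
  have hdvd1 : ∀ i, (p : ℤ) ∣ M.mulVec v₁ i := by
    intro i
    rw [← ZMod.intCast_zmod_eq_zero_iff_dvd, cast_mulVec_zmod, hcast1, hker1, Pi.zero_apply]
  have hdvd2 : ∀ i, (p : ℤ) ∣ M.mulVec v₂ i := by
    intro i
    rw [← ZMod.intCast_zmod_eq_zero_iff_dvd, cast_mulVec_zmod, hcast2, hker2, Pi.zero_apply]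
  set Cmat : Matrix (Fin N) (Fin N) ℤ := Matrix.of fun i j =>
    if j = j₀ then v₁ i else if j = j₁ then v₂ i else if i = j then 1 else 0 with hCmat
  have hCmap : Cmat.map (Int.cast : ℤ → ZMod p) = Matrix.of (fun i j =>
      if j = j₀ then w₁ i else if j = j₁ then w₂ i else if i = j then (1 : ZMod p) else 0) := by
    ext i j
    simp only [hCmat, Matrix.map_apply, Matrix.of_apply, apply_ite (Int.cast : ℤ → ZMod p),
      Int.cast_one, Int.cast_zero]
    congr 1
    · exact congrFun hcast1 i
    congr 1
    exact congrFun hcast2 i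
  have hdetC : ¬ (p : ℤ) ∣ Cmat.det := by
    intro h
    have h2 : ((Cmat.det : ℤ) : ZMod p) = 0 := (ZMod.intCast_zmod_eq_zero_iff_dvd _ _).mpr h
    rw [show ((Cmat.det : ℤ) : ZMod p) = (Int.castRingHom (ZMod p)) Cmat.det from rfl,
      RingHom.map_det] at h2
    have h3 : (Cmat.map (Int.cast : ℤ → ZMod p)).det = 0 := h2
    rw [hCmap] at h3
    exact det_colmat_ne_zero w₁ w₂ j₀ j₁ hne h10 h20 h21 h3
  have hcol0 : ∀ i, (p : ℤ) ∣ (M * Cmat) i j₀ := by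
    intro i
    have : (M * Cmat) i j₀ = M.mulVec v₁ i := by
      rw [Matrix.mul_apply, Matrix.mulVec, dotProduct]
      refine Finset.sum_congr rfl fun k _ => ?_
      simp [hCmat]
    rw [this]; exact hdvd1 i
  have hcol1 : ∀ i, (p : ℤ) ∣ (M * Cmat) i j₁ := by
    intro i
    have : (M * Cmat) i j₁ = M.mulVec v₂ i := by
      rw [Matrix.mul_apply, Matrix.mulVec, dotProduct]
      refine Finset.sum_congr rfl fun k _ => ?_
      simp [hCmat, Ne.symm hne]
    rw [this]; exact hdvd2 i
  have hp2 : (p : ℤ) ^ 2 ∣ (M * Cmat).det :=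
    two_cols_p_dvd_det p (M * Cmat) j₀ j₁ hne hcol0 hcol1
  rw [Matrix.det_mul] at hp2
  exact (Nat.prime_iff_prime_int.mp hp).pow_dvd_of_dvd_mul_right 2 hdetC hp2

end AuxDet

theorem pattern_of_valuation_one (A B : Polynomial ℤ)
    (hA : A.Monic) (hB : B.Monic)
    (hcop : IsCoprime (A.map (Int.castRingHom ℚ)) (B.map (Int.castRingHom ℚ)))
    (p : ℕ) (hp : p.Prime) (hval : padicValInt p (_root_.resultant A B) = 1) :
    ∃ r : ℤ,
      (∀ n : ℤ, (p : ℤ) ∣ (Int.gcd (A.eval n) (B.eval n) : ℤ) ↔ n ≡ r [ZMOD (p : ℤ)]) ∧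
      ∀ n : ℤ, ¬ ((p : ℤ) ^ 2 ∣ (Int.gcd (A.eval n) (B.eval n) : ℤ)) := by
  haveI : Fact p.Prime := ⟨hp⟩
  set d := A.natDegree with hd
  set e := B.natDegree with he
  set f : ℤ →+* ZMod p := Int.castRingHom (ZMod p) with hf
  set Ab := A.map f with hAb
  set Bb := B.map f with hBb
  have hAbm : Ab.Monic := hA.map f
  have hBbm : Bb.Monic := hB.map f
  have hAbd : Ab.natDegree = d := hA.natDegree_map f
  have hBbd : Bb.natDegree = e := hB.natDegree_map f
  have hAb0 : Ab ≠ 0 := hAbm.ne_zero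
  have hBb0 : Bb ≠ 0 := hBbm.ne_zero
  set Δ := _root_.resultant A B with hΔ
  set M := sylv d e A B with hM
  have hres : Δ = M.det := rfl
  have hΔ0 : Δ ≠ 0 := by
    intro h
    rw [h] at hval
    simp [padicValInt] at hval
  have hpΔ : (p : ℤ) ∣ Δ := by
    have h1 := (padicValInt_dvd_iff (p := p) 1 Δ).mpr (Or.inr (by rw [hval]))
    rwa [pow_one] at h1
  have hp2Δ : ¬ (p : ℤ) ^ 2 ∣ Δ := by
    intro h
    rcases (padicValInt_dvd_iff (p := p) 2 Δ).mp h with h | h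
    · exact hΔ0 h
    · rw [hval] at h; omega
  set Mb := sylv d e Ab Bb with hMb
  have hmap : M.map (Int.cast : ℤ → ZMod p) = Mb := sylv_map f d e A B
  have hdetMb : Mb.det = 0 := by
    have h2 : ((M.det : ℤ) : ZMod p) = 0 := by
      rw [ZMod.intCast_zmod_eq_zero_iff_dvd, ← hres]
      exact hpΔ
    have h3 : ((M.det : ℤ) : ZMod p) = (M.map (Int.cast : ℤ → ZMod p)).det := by
      rw [show ((M.det : ℤ) : ZMod p) = (Int.castRingHom (ZMod p)) M.det from rfl,
        RingHom.map_det]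
      rfl
    rw [← hmap, ← h3]
    exact h2
  obtain ⟨w, hw0, hwker⟩ := Matrix.exists_mulVec_eq_zero_iff.mpr hdetMb
  set U₀ := UofVec d e w with hU₀
  set V₀ := VofVec d e w with hV₀
  have hU₀d : U₀.degree < (e : ℕ) := UofVec_degree d e w
  have hV₀d : V₀.degree < (d : ℕ) := VofVec_degree d e w
  have hvec : vecOf d e U₀ V₀ = w := vecOf_ofVec d e w
  have hrel : U₀ * Ab + V₀ * Bb = 0 := by
    refine poly_eq_zero_of_coeffs _ (d + e) ?_ ?_
    · refine lt_of_le_of_lt (degree_add_le _ _) (max_lt ?_ ?_)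
      · exact degree_mul_lt_helper U₀ Ab d e hU₀d (le_of_eq hAbd)
      · have := degree_mul_lt_helper V₀ Bb e d hV₀d (le_of_eq hBbd)
        rwa [Nat.add_comm e d] at this
    · intro k hk
      have hb := sylv_mulVec d e Ab Bb U₀ V₀ (le_of_eq hAbd) (le_of_eq hBbd) hU₀d hV₀d
        ⟨d + e - 1 - k, by omega⟩
      rw [hvec, hwker] at hb
      simp only [Pi.zero_apply] at hb
      rw [show d + e - 1 - (d + e - 1 - k) = k by omega] at hb
      exact hb.symm
  set g := EuclideanDomain.gcd Ab Bb with hg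
  have hgA : g ∣ Ab := EuclideanDomain.gcd_dvd_left _ _
  have hgB : g ∣ Bb := EuclideanDomain.gcd_dvd_right _ _
  have hg0 : g ≠ 0 := fun h => hAb0 ((EuclideanDomain.gcd_eq_zero_iff).mp h).1
  have hBbdeg : Bb.degree = (e : ℕ) := by
    rw [degree_eq_natDegree hBb0, hBbd]
  have hgdeg1 : 1 ≤ g.natDegree := by
    by_contra h
    push_neg at h
    have hg00 : g.natDegree = 0 := by omega
    obtain ⟨c0, hgC⟩ : ∃ c0, g = C c0 :=
      ⟨g.coeff 0, eq_C_of_natDegree_le_zero (le_of_eq hg00)⟩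
    have hc0 : c0 ≠ 0 := fun hh => hg0 (by rw [hgC, hh, map_zero])
    have hcop' : IsCoprime Ab Bb := by
      have hbz := EuclideanDomain.gcd_eq_gcd_ab Ab Bb
      rw [← hg, hgC] at hbz
      refine ⟨C c0⁻¹ * EuclideanDomain.gcdA Ab Bb,
        C c0⁻¹ * EuclideanDomain.gcdB Ab Bb, ?_⟩
      have h1 : C c0⁻¹ * (Ab * EuclideanDomain.gcdA Ab Bb
          + Bb * EuclideanDomain.gcdB Ab Bb) = C c0⁻¹ * C c0 := by
        rw [← hbz]
      rw [← C_mul, inv_mul_cancel₀ hc0, C_1] at h1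
      rw [← h1]
      ring
    have hdvdB : Bb ∣ U₀ * Ab := by
      refine ⟨-V₀, ?_⟩
      rw [eq_neg_of_add_eq_zero_left hrel]
      ring
    have hU00 : U₀ = 0 := by
      by_contra hU0ne
      have hBU : Bb ∣ U₀ := (hcop'.symm).dvd_of_dvd_mul_right hdvdB
      have := Polynomial.degree_le_of_dvd hBU hU0ne
      rw [hBbdeg] at this
      exact absurd (lt_of_le_of_lt this hU₀d) (lt_irrefl _)
    have hV00 : V₀ = 0 := by
      have : V₀ * Bb = 0 := by
        rw [hU00, zero_mul, zero_add] at hrel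
        exact hrel
      rcases mul_eq_zero.mp this with h | h
      · exact h
      · exact absurd h hBb0
    apply hw0
    rw [← hvec, hU00, hV00]
    funext j
    simp [vecOf]
  have hgd : g.natDegree ≤ d := by
    rw [← hAbd]
    exact natDegree_le_of_dvd hgA hAb0
  have hge : g.natDegree ≤ e := by
    rw [← hBbd]
    exact natDegree_le_of_dvd hgB hBb0
  have hgdeg2 : g.natDegree < 2 := by
    by_contra hcon
    push_neg at hcon
    obtain ⟨A₁, hA₁⟩ := hgA
    obtain ⟨B₁, hB₁⟩ := hgB
    have hA₁0 : A₁ ≠ 0 := by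
      intro hh
      rw [hh, mul_zero] at hA₁
      exact hAb0 hA₁
    have hB₁0 : B₁ ≠ 0 := by
      intro hh
      rw [hh, mul_zero] at hB₁
      exact hBb0 hB₁
    have hndA : g.natDegree + A₁.natDegree = d := by
      rw [← hAbd, hA₁, natDegree_mul hg0 hA₁0]
    have hndB : g.natDegree + B₁.natDegree = e := by
      rw [← hBbd, hB₁, natDegree_mul hg0 hB₁0]
    have hdegB₁ : B₁.degree < (e : ℕ) := by
      rw [degree_eq_natDegree hB₁0]
      exact_mod_cast (by omega : B₁.natDegree < e)
    have hdegA₁ : (-A₁).degree < (d : ℕ) := by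
      rw [degree_neg, degree_eq_natDegree hA₁0]
      exact_mod_cast (by omega : A₁.natDegree < d)
    have hid1 : B₁ * Ab + (-A₁) * Bb = 0 := by
      rw [hA₁, hB₁]
      ring
    set w₁ := vecOf d e B₁ (-A₁) with hw₁
    have hker₁ : Mb.mulVec w₁ = 0 := by
      funext i
      rw [hw₁, sylv_mulVec d e Ab Bb B₁ (-A₁) (le_of_eq hAbd) (le_of_eq hBbd) hdegB₁ hdegA₁ i,
        hid1, coeff_zero, Pi.zero_apply]
    have hj₀lt : e - 1 - B₁.natDegree < d + e := by omega
    set j₀ : Fin (d + e) := ⟨e - 1 - B₁.natDegree, hj₀lt⟩ with hj₀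
    have hw₁j₀ : w₁ j₀ = B₁.leadingCoeff := by
      rw [hw₁]
      show (if ((j₀ : ℕ)) < e then B₁.coeff (e - 1 - (j₀ : ℕ)) else (-A₁).coeff _) = _
      rw [if_pos (by rw [hj₀]; simp only []; omega)]
      rw [hj₀]
      simp only []
      rw [show e - 1 - (e - 1 - B₁.natDegree) = B₁.natDegree by omega]
      rfl
    have hw₁j₀ne : w₁ j₀ ≠ 0 := by
      rw [hw₁j₀]
      exact leadingCoeff_ne_zero.mpr hB₁0
    set c : ZMod p := ((X * B₁).coeff B₁.natDegree) / B₁.leadingCoeff with hc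
    set q : (ZMod p)[X] := X - C c with hq
    have hq0 : q ≠ 0 := X_sub_C_ne_zero c
    have hqd : q.natDegree = 1 := natDegree_X_sub_C c
    set P := q * B₁ with hP
    set Q := -(q * A₁) with hQ
    have hP0 : P ≠ 0 := mul_ne_zero hq0 hB₁0
    have hPd : P.natDegree = 1 + B₁.natDegree := by
      rw [hP, natDegree_mul hq0 hB₁0, hqd]
    have hdegP : P.degree < (e : ℕ) := by
      rw [degree_eq_natDegree hP0]
      exact_mod_cast (by omega : P.natDegree < e)
    have hdegQ : Q.degree < (d : ℕ) := by
      rw [hQ, degree_neg]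
      rcases eq_or_ne (q * A₁) 0 with hqa | hqa
      · rw [hqa, degree_zero]
        exact_mod_cast WithBot.bot_lt_coe d
      · rw [degree_eq_natDegree hqa, natDegree_mul hq0 hA₁0, hqd]
        exact_mod_cast (by omega : 1 + A₁.natDegree < d)
    have hid2 : P * Ab + Q * Bb = 0 := by
      rw [hP, hQ, hA₁, hB₁]
      ring
    set w₂ := vecOf d e P Q with hw₂
    have hker₂ : Mb.mulVec w₂ = 0 := by
      funext i
      rw [hw₂, sylv_mulVec d e Ab Bb P Q (le_of_eq hAbd) (le_of_eq hBbd) hdegP hdegQ i,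
        hid2, coeff_zero, Pi.zero_apply]
    have hw₂j₀ : w₂ j₀ = 0 := by
      rw [hw₂]
      show (if ((j₀ : ℕ)) < e then P.coeff (e - 1 - (j₀ : ℕ)) else Q.coeff _) = _
      rw [if_pos (by rw [hj₀]; simp only []; omega), hj₀]
      simp only []
      rw [show e - 1 - (e - 1 - B₁.natDegree) = B₁.natDegree by omega]
      rw [hP, hq, sub_mul, coeff_sub, coeff_C_mul]
      rw [hc, show B₁.coeff B₁.natDegree = B₁.leadingCoeff from rfl,
        div_mul_cancel₀ _ (leadingCoeff_ne_zero.mpr hB₁0), sub_self]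
    have hj₁lt : e - 1 - P.natDegree < d + e := by omega
    set j₁ : Fin (d + e) := ⟨e - 1 - P.natDegree, hj₁lt⟩ with hj₁
    have hPlt : P.natDegree < e := by omega
    have hw₂j₁ : w₂ j₁ = P.leadingCoeff := by
      rw [hw₂]
      show (if ((j₁ : ℕ)) < e then P.coeff (e - 1 - (j₁ : ℕ)) else Q.coeff _) = _
      rw [if_pos (by rw [hj₁]; simp only []; omega), hj₁]
      simp only []
      rw [show e - 1 - (e - 1 - P.natDegree) = P.natDegree by omega]
      rfl
    have hw₂j₁ne : w₂ j₁ ≠ 0 := by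
      rw [hw₂j₁]
      exact leadingCoeff_ne_zero.mpr hP0
    have hnej : j₀ ≠ j₁ := by
      intro hh
      apply hw₂j₁ne
      rw [← hh]
      exact hw₂j₀
    apply hp2Δ
    rw [hres]
    refine p2_dvd_det_of_two_kernel hp M w₁ w₂ j₀ j₁ hnej hw₁j₀ne hw₂j₀ hw₂j₁ne ?_ ?_
    · rw [hmap]; exact hker₁
    · rw [hmap]; exact hker₂
  have hgdeg : g.natDegree = 1 := by omega
  -- the common root mod p
  have hc₁ : g.coeff 1 ≠ 0 := by
    rw [show g.coeff 1 = g.leadingCoeff by rw [leadingCoeff, hgdeg]]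
    exact leadingCoeff_ne_zero.mpr hg0
  set rb : ZMod p := -(g.coeff 0) / g.coeff 1 with hrb
  have hgform : g = C (g.coeff 1) * X + C (g.coeff 0) :=
    eq_X_add_C_of_natDegree_le_one (le_of_eq hgdeg)
  have hgr : g.eval rb = 0 := by
    conv_lhs => rw [hgform]
    rw [eval_add, eval_mul, eval_C, eval_X, eval_C, hrb, mul_comm,
      div_mul_cancel₀ _ hc₁, neg_add_cancel]
  have hroot : ∀ nb : ZMod p, (Ab.eval nb = 0 ∧ Bb.eval nb = 0) ↔ nb = rb := by
    intro nb
    constructor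
    · rintro ⟨ha, hb⟩
      have hdA : (X - C nb) ∣ Ab := dvd_iff_isRoot.mpr ha
      have hdB : (X - C nb) ∣ Bb := dvd_iff_isRoot.mpr hb
      have hdg : (X - C nb) ∣ g := EuclideanDomain.dvd_gcd hdA hdB
      obtain ⟨qq, hqq⟩ := hdg
      have hqq0 : qq ≠ 0 := by
        intro hh
        rw [hh, mul_zero] at hqq
        exact hg0 hqq
      have hqqd : qq.natDegree = 0 := by
        have := hqq ▸ hgdeg
        rw [natDegree_mul (X_sub_C_ne_zero nb) hqq0, natDegree_X_sub_C] at this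
        omega
      obtain ⟨q0, hq0eq⟩ : ∃ q0, qq = C q0 := ⟨qq.coeff 0, eq_C_of_natDegree_le_zero (le_of_eq hqqd)⟩
      have hq00 : q0 ≠ 0 := fun hh => hqq0 (by rw [hq0eq, hh, map_zero])
      have := hgr
      rw [hqq, hq0eq, eval_mul, eval_sub, eval_X, eval_C, eval_C] at this
      rcases mul_eq_zero.mp this with h | h
      · have : rb = nb := by linear_combination h
        exact this.symm
      · exact absurd h hq00
    · rintro rfl
      obtain ⟨qa, hqa⟩ := hgA
      obtain ⟨qb, hqb⟩ := hgB
      constructor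
      · rw [hqa, eval_mul, hgr, zero_mul]
      · rw [hqb, eval_mul, hgr, zero_mul]
  set r : ℤ := ((rb.val : ℕ) : ℤ) with hr
  have hrcast : ((r : ℤ) : ZMod p) = rb := by
    rw [hr]
    simp [ZMod.natCast_val, ZMod.cast_id]
  have hevalA : ∀ n : ℤ, ((p : ℤ) ∣ A.eval n ↔ Ab.eval ((n : ℤ) : ZMod p) = 0) := by
    intro n
    have h0 := ZMod.intCast_zmod_eq_zero_iff_dvd (A.eval n) p
    rw [hAb, hf, eval_intCast_map]
    exact h0.symm
  have hevalB : ∀ n : ℤ, ((p : ℤ) ∣ B.eval n ↔ Bb.eval ((n : ℤ) : ZMod p) = 0) := by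
    intro n
    have h0 := ZMod.intCast_zmod_eq_zero_iff_dvd (B.eval n) p
    rw [hBb, hf, eval_intCast_map]
    exact h0.symm
  -- Bezout identity via the adjugate
  have hd1 : 1 ≤ d := by
    have := natDegree_le_of_dvd hgA hAb0
    rw [hAbd] at this
    omega
  have hlast : d + e - 1 < d + e := by omega
  set ilast : Fin (d + e) := ⟨d + e - 1, hlast⟩ with hilast
  set wcol : Fin (d + e) → ℤ := fun k => M.adjugate k ilast with hwcol
  have hMw : ∀ i, M.mulVec wcol i = if i = ilast then Δ else 0 := by
    intro i
    have h1 : M.mulVec wcol i = (M * M.adjugate) i ilast := by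
      rw [Matrix.mul_apply, Matrix.mulVec, dotProduct]
    rw [h1, Matrix.mul_adjugate, Matrix.smul_apply, Matrix.one_apply, hres]
    by_cases hi : i = ilast <;> simp [hi]
  set U₂ := UofVec d e wcol with hU₂
  set V₂ := VofVec d e wcol with hV₂
  have hvec₂ : vecOf d e U₂ V₂ = wcol := vecOf_ofVec d e wcol
  set Qp := U₂ * A + V₂ * B with hQp
  have hQpco : ∀ i : Fin (d + e), Qp.coeff (d + e - 1 - (i : ℕ)) = if i = ilast then Δ else 0 := by
    intro i
    rw [← hMw i, ← sylv_mulVec d e A B U₂ V₂ (le_of_eq rfl) (le_of_eq rfl)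
      (UofVec_degree d e wcol) (VofVec_degree d e wcol) i, hvec₂]
  have hQpdeg : Qp.degree < ((d + e : ℕ) : WithBot ℕ) := by
    refine lt_of_le_of_lt (degree_add_le _ _) (max_lt ?_ ?_)
    · exact degree_mul_lt_helper U₂ A d e (UofVec_degree d e wcol) le_rfl
    · have := degree_mul_lt_helper V₂ B e d (VofVec_degree d e wcol) le_rfl
      rwa [Nat.add_comm e d] at this
  have hQpC : Qp = C Δ := by
    ext k
    by_cases hk : k < d + e
    · have hi := hQpco ⟨d + e - 1 - k, by omega⟩
      rw [show d + e - 1 - (d + e - 1 - k) = k by omega] at hi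
      have hiff : (⟨d + e - 1 - k, by omega⟩ : Fin (d + e)) = ilast ↔ k = 0 := by
        rw [hilast, Fin.mk.injEq]
        omega
      rw [hi]
      by_cases hk0 : k = 0
      · rw [if_pos (hiff.mpr hk0), coeff_C, if_pos hk0]
      · rw [if_neg (fun hh => hk0 (hiff.mp hh)), coeff_C, if_neg hk0]
    · rw [coeff_eq_zero_of_degree_lt
        (lt_of_lt_of_le hQpdeg (by exact_mod_cast Nat.le_of_not_lt hk)), coeff_C,
        if_neg (by omega)]
  have hbezout : ∀ n : ℤ, U₂.eval n * A.eval n + V₂.eval n * B.eval n = Δ := by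
    intro n
    have := congrArg (fun q => Polynomial.eval n q) hQpC
    simpa [hQp, eval_add, eval_mul] using this
  -- final assembly
  refine ⟨r, fun n => ?_, fun n hdvd => ?_⟩
  · have hgcdA : ((Int.gcd (A.eval n) (B.eval n) : ℤ)) ∣ A.eval n := Int.gcd_dvd_left _ _
    have hgcdB : ((Int.gcd (A.eval n) (B.eval n) : ℤ)) ∣ B.eval n := Int.gcd_dvd_right _ _
    constructor
    · intro h
      have h1 : (p : ℤ) ∣ A.eval n := h.trans hgcdA
      have h2 : (p : ℤ) ∣ B.eval n := h.trans hgcdB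
      have h3 : ((n : ℤ) : ZMod p) = rb :=
        (hroot _).mp ⟨(hevalA n).mp h1, (hevalB n).mp h2⟩
      rw [← hrcast] at h3
      exact (ZMod.intCast_eq_intCast_iff _ _ _).mp h3
    · intro h
      have h3 : ((n : ℤ) : ZMod p) = rb := by
        rw [← hrcast]
        exact (ZMod.intCast_eq_intCast_iff _ _ _).mpr h
      have h4 := (hroot _).mpr h3
      exact Int.natCast_dvd_natCast.mpr (Int.dvd_gcd ((hevalA n).mpr h4.1) ((hevalB n).mpr h4.2))
  · have hgcdA : ((Int.gcd (A.eval n) (B.eval n) : ℤ)) ∣ A.eval n := Int.gcd_dvd_left _ _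
    have hgcdB : ((Int.gcd (A.eval n) (B.eval n) : ℤ)) ∣ B.eval n := Int.gcd_dvd_right _ _
    have h1 : (p : ℤ) ^ 2 ∣ A.eval n := hdvd.trans hgcdA
    have h2 : (p : ℤ) ^ 2 ∣ B.eval n := hdvd.trans hgcdB
    apply hp2Δ
    rw [← hbezout n]
    exact dvd_add (h1.mul_left _) (h2.mul_left _)
end

section
/- Let p be a prime and suppose A(x) ≡ (x−r₁)⋯(x−r_d) and B(x) ≡ (x−s₁)⋯(x−s_e) mod p^ω, where the r_i are pairwise distinct mod p and the s_j are pairwise distinct mod p. If n is an integer with n ≡ r_i ≡ s_j (mod p) for some i, j, then gcd(A(n), B(n), p^ω) = gcd(n − r_i, r_i − s_j, p^ω). If no such pair (i,j) exists, then gcd(A(n), B(n), p^ω) = 1. -/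
open Polynomial

open Finset

private lemma int_gcd_eq_of_modeq {a b m : ℤ} (h : a ≡ b [ZMOD m]) :
    Int.gcd a m = Int.gcd b m := by
  have key : ∀ x y : ℤ, x ≡ y [ZMOD m] → Int.gcd x m ∣ Int.gcd y m := by
    intro x y hxy
    have hd : m ∣ y - x := hxy.dvd
    have h1 : (↑(Int.gcd x m) : ℤ) ∣ y := by
      have : y = x + (y - x) := by ring
      rw [this]
      exact dvd_add (Int.gcd_dvd_left _ _) ((Int.gcd_dvd_right _ _).trans hd)
    exact Int.natCast_dvd_natCast.mp (Int.dvd_coe_gcd h1 (Int.gcd_dvd_right _ _))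
  exact Nat.dvd_antisymm (key a b h) (key b a h.symm)

private lemma gcd_prod_pow {m : ℕ} {p : ℕ} (hp : p.Prime) (ω : ℕ) (x : Fin m → ℤ) (i : Fin m)
    (h : ∀ k, k ≠ i → ¬ ((p : ℤ) ∣ x k)) :
    Int.gcd (∏ k, x k) ((p : ℤ) ^ ω) = Int.gcd (x i) ((p : ℤ) ^ ω) := by
  have hprod : ∏ k, x k = x i * ∏ k ∈ Finset.univ.erase i, x k :=
    (Finset.mul_prod_erase Finset.univ x (Finset.mem_univ i)).symm
  have hb : ¬ ((p : ℤ) ∣ ∏ k ∈ Finset.univ.erase i, x k) := by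
    intro hdvd
    obtain ⟨k, hk, hdk⟩ := ((Nat.prime_iff_prime_int.mp hp).dvd_finset_prod_iff _).mp hdvd
    exact h k (Finset.ne_of_mem_erase hk) hdk
  have hcop : Nat.Coprime ((∏ k ∈ Finset.univ.erase i, x k).natAbs) (p ^ ω) := by
    apply Nat.Coprime.pow_right
    rw [Nat.coprime_comm]
    exact (Nat.Prime.coprime_iff_not_dvd hp).mpr (fun hd => hb (Int.natCast_dvd.mpr hd))
  rw [hprod, Int.gcd_def, Int.gcd_def, Int.natAbs_mul]
  have hq : ((p:ℤ)^ω).natAbs = p ^ ω := by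
    rw [Int.natAbs_pow]; norm_num
  rw [hq]
  exact Nat.Coprime.gcd_mul_right_cancel _ hcop

private lemma gcd_prod_pow_one {m : ℕ} {p : ℕ} (hp : p.Prime) (ω : ℕ) (x : Fin m → ℤ)
    (h : ∀ k, ¬ ((p : ℤ) ∣ x k)) :
    Int.gcd (∏ k, x k) ((p : ℤ) ^ ω) = 1 := by
  have hb : ¬ ((p : ℤ) ∣ ∏ k, x k) := by
    intro hdvd
    obtain ⟨k, _, hdk⟩ := ((Nat.prime_iff_prime_int.mp hp).dvd_finset_prod_iff _).mp hdvd
    exact h k hdk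
  have hcop : Nat.Coprime ((∏ k, x k).natAbs) (p ^ ω) := by
    apply Nat.Coprime.pow_right
    rw [Nat.coprime_comm]
    exact (Nat.Prime.coprime_iff_not_dvd hp).mpr (fun hd => hb (Int.natCast_dvd.mpr hd))
  rw [Int.gcd_def]
  have hq : ((p:ℤ)^ω).natAbs = p ^ ω := by
    rw [Int.natAbs_pow]; norm_num
  rw [hq]
  exact hcop

private lemma nat_gcd_gcd_distrib (a b q : ℕ) :
    Nat.gcd (Nat.gcd a b) q = Nat.gcd (Nat.gcd a q) (Nat.gcd b q) := by
  apply Nat.dvd_antisymm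
  · exact Nat.dvd_gcd
      (Nat.dvd_gcd ((Nat.gcd_dvd_left _ _).trans (Nat.gcd_dvd_left a b)) (Nat.gcd_dvd_right _ _))
      (Nat.dvd_gcd ((Nat.gcd_dvd_left _ _).trans (Nat.gcd_dvd_right a b)) (Nat.gcd_dvd_right _ _))
  · exact Nat.dvd_gcd
      (Nat.dvd_gcd ((Nat.gcd_dvd_left _ _).trans (Nat.gcd_dvd_left a q))
        ((Nat.gcd_dvd_right _ _).trans (Nat.gcd_dvd_left b q)))
      ((Nat.gcd_dvd_left _ _).trans (Nat.gcd_dvd_right a q))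

private lemma int_gcd_add_right (a b : ℤ) : Int.gcd a (b + a) = Int.gcd a b := by
  apply Nat.dvd_antisymm
  · refine Int.natCast_dvd_natCast.mp (Int.dvd_coe_gcd (Int.gcd_dvd_left _ _) ?_)
    have h1 : (↑(Int.gcd a (b + a)) : ℤ) ∣ a := Int.gcd_dvd_left _ _
    have h2 : (↑(Int.gcd a (b + a)) : ℤ) ∣ b + a := Int.gcd_dvd_right _ _
    simpa using dvd_sub h2 h1
  · exact Int.natCast_dvd_natCast.mp
      (Int.dvd_coe_gcd (Int.gcd_dvd_left _ _) (dvd_add (Int.gcd_dvd_right _ _) (Int.gcd_dvd_left _ _)))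


theorem gcd_split_simple_roots (A B : Polynomial ℤ) (p : ℕ) (hp : p.Prime) (ω : ℕ)
    (d e : ℕ) (r : Fin d → ℤ) (s : Fin e → ℤ)
    (hrdist : ∀ i j, i ≠ j → ¬ (r i ≡ r j [ZMOD (p : ℤ)]))
    (hsdist : ∀ i j, i ≠ j → ¬ (s i ≡ s j [ZMOD (p : ℤ)]))
    (hAfact : A.map (Int.castRingHom (ZMod (p ^ ω))) =
      ∏ i, (Polynomial.X - Polynomial.C ((r i : ZMod (p ^ ω)))))
    (hBfact : B.map (Int.castRingHom (ZMod (p ^ ω))) =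
      ∏ j, (Polynomial.X - Polynomial.C ((s j : ZMod (p ^ ω)))))
    (n : ℤ) :
    (∀ i j, n ≡ r i [ZMOD (p : ℤ)] → n ≡ s j [ZMOD (p : ℤ)] →
      Int.gcd ((Int.gcd (A.eval n) (B.eval n) : ℤ)) ((p : ℤ) ^ ω) =
        Int.gcd ((Int.gcd (n - r i) (r i - s j) : ℤ)) ((p : ℤ) ^ ω)) ∧
    ((¬ ∃ i j, n ≡ r i [ZMOD (p : ℤ)] ∧ n ≡ s j [ZMOD (p : ℤ)]) →
      Int.gcd ((Int.gcd (A.eval n) (B.eval n) : ℤ)) ((p : ℤ) ^ ω) = 1) := by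
  have hqcast : (((p ^ ω : ℕ) : ℤ)) = (p : ℤ) ^ ω := by push_cast; ring
  -- modular equivalences for evaluations
  have hA : A.eval n ≡ ∏ i, (n - r i) [ZMOD ((p ^ ω : ℕ) : ℤ)] := by
    rw [← ZMod.intCast_eq_intCast_iff]
    calc ((A.eval n : ℤ) : ZMod (p ^ ω))
        = (A.map (Int.castRingHom (ZMod (p ^ ω)))).eval ((n : ℤ) : ZMod (p ^ ω)) := by
          rw [Polynomial.eval_intCast_map]; rfl
      _ = ∏ i, (((n : ℤ) : ZMod (p ^ ω)) - ((r i : ℤ) : ZMod (p ^ ω))) := by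
          rw [hAfact, Polynomial.eval_prod]; simp
      _ = ((∏ i, (n - r i) : ℤ) : ZMod (p ^ ω)) := by push_cast; ring
  have hB : B.eval n ≡ ∏ j, (n - s j) [ZMOD ((p ^ ω : ℕ) : ℤ)] := by
    rw [← ZMod.intCast_eq_intCast_iff]
    calc ((B.eval n : ℤ) : ZMod (p ^ ω))
        = (B.map (Int.castRingHom (ZMod (p ^ ω)))).eval ((n : ℤ) : ZMod (p ^ ω)) := by
          rw [Polynomial.eval_intCast_map]; rfl
      _ = ∏ j, (((n : ℤ) : ZMod (p ^ ω)) - ((s j : ℤ) : ZMod (p ^ ω))) := by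
          rw [hBfact, Polynomial.eval_prod]; simp
      _ = ((∏ j, (n - s j) : ℤ) : ZMod (p ^ ω)) := by push_cast; ring
  have gA : Int.gcd (A.eval n) ((p : ℤ) ^ ω) = Int.gcd (∏ i, (n - r i)) ((p : ℤ) ^ ω) := by
    rw [← hqcast]; exact int_gcd_eq_of_modeq hA
  have gB : Int.gcd (B.eval n) ((p : ℤ) ^ ω) = Int.gcd (∏ j, (n - s j)) ((p : ℤ) ^ ω) := by
    rw [← hqcast]; exact int_gcd_eq_of_modeq hB
  -- distribute the outer gcd
  have key : ∀ a b : ℤ, Int.gcd ((Int.gcd a b : ℤ)) ((p : ℤ) ^ ω)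
      = Nat.gcd (Int.gcd a ((p : ℤ) ^ ω)) (Int.gcd b ((p : ℤ) ^ ω)) := by
    intro a b
    rw [Int.gcd_def, Int.natAbs_natCast, Int.gcd_def, Int.gcd_def, Int.gcd_def]
    exact nat_gcd_gcd_distrib _ _ _
  -- dvd ↔ modeq
  have hdvd_iff : ∀ a : ℤ, ((p : ℤ) ∣ n - a) ↔ n ≡ a [ZMOD (p : ℤ)] := by
    intro a
    rw [Int.modEq_iff_dvd, show a - n = -(n - a) by ring, dvd_neg]
  constructor
  · intro i j hri hsj
    have hgA : Int.gcd (∏ k, (n - r k)) ((p : ℤ) ^ ω) = Int.gcd (n - r i) ((p : ℤ) ^ ω) := by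
      apply gcd_prod_pow hp ω _ i
      intro k hk hdvd
      exact hrdist i k (Ne.symm hk) (hri.symm.trans ((hdvd_iff (r k)).mp hdvd))
    have hgB : Int.gcd (∏ k, (n - s k)) ((p : ℤ) ^ ω) = Int.gcd (n - s j) ((p : ℤ) ^ ω) := by
      apply gcd_prod_pow hp ω _ j
      intro k hk hdvd
      exact hsdist j k (Ne.symm hk) (hsj.symm.trans ((hdvd_iff (s k)).mp hdvd))
    have hinner : Int.gcd (n - r i) (n - s j) = Int.gcd (n - r i) (r i - s j) := by
      have := int_gcd_add_right (n - r i) (r i - s j)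
      rw [show r i - s j + (n - r i) = n - s j by ring] at this
      exact this
    rw [key, gA, gB, hgA, hgB, ← key, hinner, key]
  · intro hne
    push_neg at hne
    by_cases hex : ∃ i, n ≡ r i [ZMOD (p : ℤ)]
    · obtain ⟨i, hi⟩ := hex
      have hgB : Int.gcd (∏ k, (n - s k)) ((p : ℤ) ^ ω) = 1 := by
        apply gcd_prod_pow_one hp ω
        intro k hdvd
        exact hne i k hi ((hdvd_iff (s k)).mp hdvd)
      rw [key, gB, hgB, Nat.gcd_one_right]
    · push_neg at hex
      have hgA : Int.gcd (∏ k, (n - r k)) ((p : ℤ) ^ ω) = 1 := by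
        apply gcd_prod_pow_one hp ω
        intro k hdvd
        exact hex k ((hdvd_iff (r k)).mp hdvd)
      rw [key, gA, hgA, Nat.gcd_one_left]
end

section
/- Let A, B ∈ ℤ[x] be monic, coprime in ℚ[x], and both split with simple roots modulo a prime p. Let δ be the smallest positive integer in the ideal generated by A and B in ℤ[x]. Then ν_p(δ) equals the largest integer μ for which there exists n ∈ ℤ with A(n) ≡ 0 (mod p^μ) and B(n) ≡ 0 (mod p^μ). -/
open Polynomial

namespace DeltaProofAux

variable {p : ℕ} [Fact p.Prime]

lemma toZMod_eq_zero_iff (x : ℤ_[p]) : PadicInt.toZMod x = 0 ↔ ‖x‖ < 1 := by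
  rw [← RingHom.mem_ker, PadicInt.ker_toZMod, PadicInt.maximalIdeal_eq_span_p,
    Ideal.mem_span_singleton, PadicInt.norm_lt_one_iff_dvd]

lemma norm_eq_one_of_toZMod_ne {x : ℤ_[p]} (h : PadicInt.toZMod x ≠ 0) : ‖x‖ = 1 :=
  le_antisymm (PadicInt.norm_le_one x)
    (not_lt.mp fun hlt => h ((toZMod_eq_zero_iff x).mpr hlt))

lemma map_map_toZMod (P : Polynomial ℤ) :
    (P.map (Int.castRingHom ℤ_[p])).map (PadicInt.toZMod) = P.map (Int.castRingHom (ZMod p)) := by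
  rw [Polynomial.map_map]
  congr 1
  exact RingHom.ext_int _ _

lemma eval_map_hom {R S : Type*} [CommSemiring R] [CommSemiring S] (f : R →+* S)
    (P : Polynomial R) (x : R) : (P.map f).eval (f x) = f (P.eval x) := by
  rw [Polynomial.eval_map, Polynomial.eval₂_at_apply]

lemma hensel_roots {A : Polynomial ℤ} (hA : A.Monic)
    (r : Fin A.natDegree → ZMod p) (hrinj : Function.Injective r)
    (hsplit : A.map (Int.castRingHom (ZMod p)) = ∏ i, (X - C (r i))) :
    ∃ z : Fin A.natDegree → ℤ_[p],
      (∀ i, PadicInt.toZMod (z i) = r i) ∧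
      A.map (Int.castRingHom ℤ_[p]) = ∏ i, (X - C (z i)) := by
  set F := A.map (Int.castRingHom ℤ_[p]) with hF
  have hFred : F.map PadicInt.toZMod = ∏ i, (X - C (r i)) := by
    rw [hF, map_map_toZMod]; exact hsplit
  have hroot : ∀ i : Fin A.natDegree, ∃ z : ℤ_[p],
      F.eval z = 0 ∧ PadicInt.toZMod z = r i := by
    intro i
    set a : ℤ_[p] := (((r i).val : ℕ) : ℤ_[p]) with ha
    have hZa : PadicInt.toZMod a = r i := by
      rw [ha, map_natCast]
      exact ZMod.natCast_rightInverse (r i)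
    have hQ : ∏ j, (X - C (r j)) =
        (X - C (r i)) * ∏ j ∈ Finset.univ.erase i, (X - C (r j)) :=
      (Finset.mul_prod_erase Finset.univ _ (Finset.mem_univ i)).symm
    have hFa : ‖F.eval a‖ < 1 := by
      rw [← toZMod_eq_zero_iff, ← eval_map_hom PadicInt.toZMod F a, hZa, hFred,
        Polynomial.eval_prod]
      exact Finset.prod_eq_zero (Finset.mem_univ i) (by simp)
    have hFd : ‖F.derivative.eval a‖ = 1 := by
      apply norm_eq_one_of_toZMod_ne
      rw [← eval_map_hom PadicInt.toZMod F.derivative a, hZa,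
        show map PadicInt.toZMod (derivative F) = derivative (map PadicInt.toZMod F) from
          (Polynomial.derivative_map F PadicInt.toZMod).symm,
        hFred, hQ, derivative_mul]
      have h1 : derivative (X - C (r i)) = 1 := by
        rw [derivative_sub, derivative_X, derivative_C, sub_zero]
      rw [h1, one_mul]
      simp only [eval_add, eval_mul, eval_sub, eval_X, eval_C, sub_self, zero_mul, add_zero]
      rw [Polynomial.eval_prod]
      apply Finset.prod_ne_zero_iff.mpr
      intro j hj
      simp only [eval_sub, eval_X, eval_C, sub_ne_zero]
      exact fun h => (Finset.mem_erase.mp hj).1 (hrinj h.symm)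
    have hnorm : ‖F.eval a‖ < ‖F.derivative.eval a‖ ^ 2 := by
      rw [hFd, one_pow]; exact hFa
    obtain ⟨z, hz0, hzd, -, -⟩ := hensels_lemma hnorm
    refine ⟨z, hz0, ?_⟩
    have : PadicInt.toZMod (z - a) = 0 := by
      rw [toZMod_eq_zero_iff]
      rw [coe_aeval_eq_eval, hFd] at hzd
      exact hzd
    rw [map_sub] at this
    have := sub_eq_zero.mp this
    rw [this, hZa]
  choose z hz0 hzZ using hroot
  have hzZinj : ∀ i j, i ≠ j → PadicInt.toZMod (z i - z j) ≠ 0 := by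
    intro i j hij
    rw [map_sub, sub_ne_zero, hzZ, hzZ]
    exact fun h => hij (hrinj h)
  refine ⟨z, hzZ, ?_⟩
  have hdvd : (∏ i, (X - C (z i))) ∣ F := by
    apply Finset.prod_dvd_of_coprime
    · intro i _ j hj hij
      obtain ⟨c, hc⟩ := PadicInt.isUnit_iff.mpr (norm_eq_one_of_toZMod_ne (hzZinj i j hij))
      refine ⟨-C ((c⁻¹ : ℤ_[p]ˣ) : ℤ_[p]), C ((c⁻¹ : ℤ_[p]ˣ) : ℤ_[p]), ?_⟩
      have h1 : ((c⁻¹ : ℤ_[p]ˣ) : ℤ_[p]) * (z i - z j) = 1 := by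
        rw [← hc, Units.inv_mul]
      calc -C ((c⁻¹ : ℤ_[p]ˣ) : ℤ_[p]) * (X - C (z i)) +
            C ((c⁻¹ : ℤ_[p]ˣ) : ℤ_[p]) * (X - C (z j))
          = C (((c⁻¹ : ℤ_[p]ˣ) : ℤ_[p]) * (z i - z j)) := by
            rw [C_mul, C_sub]; ring
        _ = 1 := by rw [h1, C_1]
    · intro i _
      exact dvd_iff_isRoot.mpr (hz0 i)
  obtain ⟨q, hq⟩ := hdvd
  have hFm : F.Monic := hA.map _
  have hprodm : (∏ i, (X - C (z i))).Monic :=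
    monic_prod_of_monic _ _ fun i _ => monic_X_sub_C (z i)
  have hq0 : q ≠ 0 := by
    rintro rfl
    rw [mul_zero] at hq
    exact hFm.ne_zero hq
  have h1 : F.natDegree = A.natDegree := hA.natDegree_map _
  have h2 : (∏ i, (X - C (z i))).natDegree = A.natDegree := by
    rw [Polynomial.natDegree_prod _ _ fun i _ => X_sub_C_ne_zero (z i)]
    simp [natDegree_X_sub_C]
  have hdeg : q.natDegree = 0 := by
    have := Polynomial.natDegree_mul hprodm.ne_zero hq0
    rw [← hq, h1, h2] at this
    omega
  have hlc : q.leadingCoeff = 1 := by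
    have := Polynomial.leadingCoeff_mul (∏ i, (X - C (z i))) q
    rw [← hq, hFm.leadingCoeff, hprodm.leadingCoeff, one_mul] at this
    exact this.symm
  have hc0 : q.coeff 0 = 1 := by
    have h3 : q.coeff q.natDegree = 1 := hlc
    rwa [hdeg] at h3
  rw [hq, Polynomial.eq_C_of_natDegree_eq_zero hdeg, hc0, C_1, mul_one]


set_option maxHeartbeats 1000000 in
lemma key {A B : Polynomial ℤ} (hA : A.Monic) (hB : B.Monic)
    (hcop : IsCoprime (A.map (Int.castRingHom ℚ)) (B.map (Int.castRingHom ℚ)))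
    (hAsplit : ∃ r : Fin A.natDegree → ZMod p, Function.Injective r ∧
      A.map (Int.castRingHom (ZMod p)) = ∏ i, (X - C (r i)))
    {δ : ℤ}
    (hδ : IsLeast {m : ℤ | 0 < m ∧ ∃ U V : Polynomial ℤ, A * U + B * V = C m} δ)
    (hd : 0 < A.natDegree) (he : 0 < B.natDegree) :
    ∃ n : ℤ, ((p : ℤ) ^ padicValInt p δ) ∣ A.eval n ∧ ((p : ℤ) ^ padicValInt p δ) ∣ B.eval n := by
  classical
  obtain ⟨r, hrinj, hrsplit⟩ := hAsplit
  obtain ⟨z, hzZ, hzfact⟩ := hensel_roots hA r hrinj hrsplit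
  have hδpos : 0 < δ := hδ.1.1
  -- basic ring homs
  set φZ : ℤ →+* ℤ_[p] := Int.castRingHom ℤ_[p] with hφZ
  set ρ : ℤ_[p] →+* ℚ_[p] := PadicInt.Coe.ringHom with hρ
  set φQ : ℤ →+* ℚ_[p] := Int.castRingHom ℚ_[p] with hφQ
  have hcomp : ρ.comp φZ = φQ := RingHom.ext_int _ _
  set Ap := A.map φQ with hAp
  set Bp := B.map φQ with hBp
  have hApZ : Ap = (A.map φZ).map ρ := by rw [hAp, Polynomial.map_map, hcomp]
  have hBpZ : Bp = (B.map φZ).map ρ := by rw [hBp, Polynomial.map_map, hcomp]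
  set zq : Fin A.natDegree → ℚ_[p] := fun i => ((z i : ℤ_[p]) : ℚ_[p]) with hzq
  have hzinj : Function.Injective z := fun i j h => hrinj (by rw [← hzZ, ← hzZ, h])
  have hzqinj : Function.Injective zq := fun i j h => hzinj (Subtype.coe_injective h)
  have hApfact : Ap = ∏ i, (X - C (zq i)) := by
    rw [hApZ, hzfact, Polynomial.map_prod]
    simp only [Polynomial.map_sub, Polynomial.map_X, Polynomial.map_C]
    rfl
  have hAz0 : ∀ i, (A.map φZ).eval (z i) = 0 := by
    intro i
    rw [hzfact, Polynomial.eval_prod]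
    exact Finset.prod_eq_zero (Finset.mem_univ i) (by simp)
  have hApz : ∀ i, Ap.eval (zq i) = 0 := by
    intro i
    have : Ap.eval (ρ (z i)) = ρ ((A.map φZ).eval (z i)) := by
      rw [hApZ, eval_map_hom]
    rw [hAz0 i, map_zero] at this
    exact this
  set Bz : Fin A.natDegree → ℤ_[p] := fun i => (B.map φZ).eval (z i) with hBz
  have hBpz : ∀ i, Bp.eval (zq i) = ((Bz i : ℤ_[p]) : ℚ_[p]) := by
    intro i
    rw [hBpZ]
    exact eval_map_hom ρ (B.map φZ) (z i)
  -- coprimality over ℚ_p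
  have hcopp : IsCoprime Ap Bp := by
    have h1 := hcop.map (Polynomial.mapRingHom (Rat.castHom ℚ_[p]))
    simp only [Polynomial.coe_mapRingHom, Polynomial.map_map] at h1
    have h2 : (Rat.castHom ℚ_[p]).comp (Int.castRingHom ℚ) = φQ := RingHom.ext_int _ _
    rwa [h2, ← hAp, ← hBp] at h1
  have hbne : ∀ i, Bp.eval (zq i) ≠ 0 := by
    intro i hzero
    obtain ⟨u, v, huv⟩ := hcopp
    have := congrArg (Polynomial.eval (zq i)) huv
    simp only [eval_add, eval_mul, hApz i, hzero, mul_zero, add_zero, eval_one] at this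
    exact zero_ne_one this
  -- the valuations
  have hBzne : ∀ i, Bz i ≠ 0 := by
    intro i h
    apply hbne i
    rw [hBpz i, h]
    simp
  set nn : Fin A.natDegree → ℕ := fun i => (Bz i).valuation with hnn
  have hBznorm : ∀ i, ‖Bz i‖ = (p : ℝ) ^ (-(nn i : ℤ)) := by
    intro i
    rw [PadicInt.norm_eq_zpow_neg_valuation (hBzne i), hnn]
  set ν : ℕ := Finset.univ.sup nn with hν
  have hp1R : (1:ℝ) < (p:ℝ) := by exact_mod_cast (Fact.out : p.Prime).one_lt
  have hp0R : (0:ℝ) < (p:ℝ) := lt_trans one_pos hp1R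
  have hφQinj : Function.Injective ⇑φQ := fun a b h =>
    Int.cast_injective (α := ℚ_[p]) (by simpa [hφQ] using h)
  -- Claim 1 : padicValInt p δ ≤ ν
  have claim1 : padicValInt p δ ≤ ν := by
    by_contra hlt
    push_neg at hlt
    have hpow : (p : ℤ) ^ (ν + 1) ∣ δ :=
      dvd_trans (pow_dvd_pow _ (by omega)) (padicValInt_dvd δ)
    obtain ⟨-, U, V, hUV⟩ := hδ.1
    set U₁ := U %ₘ B with hU₁
    set V₁ := V + A * (U /ₘ B) with hV₁
    have hid : A * U₁ + B * V₁ = C δ := by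
      have e1 : U %ₘ B + B * (U /ₘ B) = U := modByMonic_add_div U B
      calc A * U₁ + B * V₁ = A * (U %ₘ B + B * (U /ₘ B)) + B * V := by rw [hU₁, hV₁]; ring
        _ = C δ := by rw [e1, hUV]
    have hU₁deg : U₁.degree < B.degree := degree_modByMonic_lt U hB
    -- Lagrange interpolation data
    set Pint : Fin A.natDegree → Polynomial ℤ_[p] :=
      fun i => ∏ j ∈ Finset.univ.erase i, (X - C (z j)) with hPint
    set Pq : Fin A.natDegree → Polynomial ℚ_[p] := fun i => (Pint i).map ρ with hPq
    have hPqprod : ∀ i, Pq i = ∏ j ∈ Finset.univ.erase i, (X - C (zq j)) := by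
      intro i
      show (Pint i).map ρ = _
      rw [show Pint i = ∏ j ∈ Finset.univ.erase i, (X - C (z j)) from rfl, Polynomial.map_prod]
      simp only [Polynomial.map_sub, Polynomial.map_X, Polynomial.map_C]
      rfl
    set w : Fin A.natDegree → ℚ_[p] := fun i => (Pq i).eval (zq i) with hw
    have hweq : ∀ i, w i = (((Pint i).eval (z i) : ℤ_[p]) : ℚ_[p]) := by
      intro i
      exact eval_map_hom ρ (Pint i) (z i)
    have hzu : ∀ i j, i ≠ j → IsUnit (z i - z j) := by
      intro i j hij
      apply PadicInt.isUnit_iff.mpr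
      apply norm_eq_one_of_toZMod_ne
      rw [map_sub, hzZ, hzZ, sub_ne_zero]
      exact fun h => hij (hrinj h)
    have hwnorm : ∀ i, ‖w i‖ = 1 := by
      intro i
      have hu : IsUnit ((Pint i).eval (z i)) := by
        rw [show Pint i = ∏ j ∈ Finset.univ.erase i, (X - C (z j)) from rfl,
          Polynomial.eval_prod]
        refine Finset.prod_induction _ IsUnit (fun a b => IsUnit.mul) isUnit_one ?_
        intro j hj
        simp only [eval_sub, eval_X, eval_C]
        exact hzu i j fun h => (Finset.mem_erase.mp hj).1 h.symm
      rw [hweq i, ← PadicInt.norm_def]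
      exact PadicInt.isUnit_iff.mp hu
    have hwne : ∀ i, w i ≠ 0 := by
      intro i h
      have := hwnorm i
      rw [h, norm_zero] at this
      exact zero_ne_one this
    set c : Fin A.natDegree → ℚ_[p] := fun i => (Bp.eval (zq i))⁻¹ * (w i)⁻¹ with hc
    set Vt : Polynomial ℚ_[p] := ∑ i, C (c i) * Pq i with hVt
    have heval : ∀ m, Vt.eval (zq m) = (Bp.eval (zq m))⁻¹ := by
      intro m
      rw [hVt, eval_finset_sum]
      rw [Finset.sum_eq_single m ?side ?notmem]
      case side =>
        intro i _ hne
        rw [eval_mul, hPqprod i, Polynomial.eval_prod]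
        have : (X - C (zq m)).eval (zq m) = 0 := by simp
        rw [Finset.prod_eq_zero (Finset.mem_erase.mpr ⟨hne.symm, Finset.mem_univ m⟩) this,
          mul_zero]
      case notmem => intro h; exact absurd (Finset.mem_univ m) h
      rw [eval_mul, eval_C]
      have : (Pq m).eval (zq m) = w m := rfl
      rw [this, show c m = (Bp.eval (zq m))⁻¹ * (w m)⁻¹ from rfl, mul_assoc,
        inv_mul_cancel₀ (hwne m), mul_one]
    have hAdvd : Ap ∣ (1 - Bp * Vt) := by
      rw [hApfact]
      apply Finset.prod_dvd_of_coprime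
      · exact (pairwise_coprime_X_sub_C hzqinj).set_pairwise _
      · intro i _
        rw [dvd_iff_isRoot]
        show (1 - Bp * Vt).eval (zq i) = 0
        rw [eval_sub, eval_one, eval_mul, heval i, mul_inv_cancel₀ (hbne i), sub_self]
    have hApm : Ap.Monic := hA.map φQ
    have hBpm : Bp.Monic := hB.map φQ
    set Ut : Polynomial ℚ_[p] := (1 - Bp * Vt) /ₘ Ap with hUt
    have hbez : Ap * Ut + Bp * Vt = 1 := by
      have e2 := modByMonic_add_div (1 - Bp * Vt) Ap
      rw [(modByMonic_eq_zero_iff_dvd hApm).mpr hAdvd, zero_add] at e2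
      rw [hUt]
      linear_combination e2
    -- degrees
    have hApdeg : Ap.degree = (A.natDegree : WithBot ℕ) := by
      rw [hAp, degree_map_eq_of_injective hφQinj, degree_eq_natDegree hA.ne_zero]
    have hBpdeg : Bp.degree = (B.natDegree : WithBot ℕ) := by
      rw [hBp, degree_map_eq_of_injective hφQinj, degree_eq_natDegree hB.ne_zero]
    have hPqnat : ∀ i, (Pq i).natDegree = A.natDegree - 1 := by
      intro i
      rw [hPqprod i, natDegree_prod _ _ (fun j _ => X_sub_C_ne_zero (zq j))]
      simp [natDegree_X_sub_C, Finset.card_erase_of_mem]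
    have hterm : ∀ i : Fin A.natDegree, (C (c i) * Pq i).degree < (A.natDegree : WithBot ℕ) := by
      intro i
      apply lt_of_le_of_lt (degree_mul_le _ _)
      have h2 : (Pq i).degree ≤ ((A.natDegree - 1 : ℕ) : WithBot ℕ) := by
        rw [← hPqnat i]
        exact degree_le_natDegree
      calc (C (c i)).degree + (Pq i).degree ≤ 0 + ((A.natDegree - 1 : ℕ) : WithBot ℕ) :=
            add_le_add degree_C_le h2
        _ = ((A.natDegree - 1 : ℕ) : WithBot ℕ) := zero_add _
        _ < (A.natDegree : WithBot ℕ) := WithBot.coe_lt_coe.mpr (Nat.sub_lt hd one_pos)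
    have hVtdeg : Vt.degree < (A.natDegree : WithBot ℕ) := by
      rw [hVt]
      refine lt_of_le_of_lt (degree_sum_le _ _) ?_
      rw [Finset.sup_lt_iff (WithBot.bot_lt_coe _)]
      intro i _
      exact hterm i
    have hUtdeg : Ut.degree < Bp.degree := by
      by_cases h0 : Ut = 0
      · rw [h0, degree_zero, hBpdeg]
        exact WithBot.bot_lt_coe _
      · have hbez' : Ap * Ut = 1 - Bp * Vt := by linear_combination hbez
        have hrhs : (1 - Bp * Vt).degree <
            (A.natDegree : WithBot ℕ) + (B.natDegree : WithBot ℕ) := by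
          apply lt_of_le_of_lt (degree_sub_le _ _)
          rw [sup_lt_iff]
          constructor
          · rw [degree_one]
            have : ((0:ℕ) : WithBot ℕ) < ((A.natDegree + B.natDegree : ℕ) : WithBot ℕ) :=
              WithBot.coe_lt_coe.mpr (show 0 < A.natDegree + B.natDegree by omega)
            rw [Nat.cast_add] at this
            exact_mod_cast this
          · rw [degree_mul, hBpdeg]
            calc (B.natDegree : WithBot ℕ) + Vt.degree
                < (B.natDegree : WithBot ℕ) + (A.natDegree : WithBot ℕ) :=
                  (WithBot.add_lt_add_iff_left (WithBot.coe_ne_bot)).mpr hVtdeg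
              _ = (A.natDegree : WithBot ℕ) + (B.natDegree : WithBot ℕ) := add_comm _ _
        have h5 : (A.natDegree : WithBot ℕ) + Ut.degree <
            (A.natDegree : WithBot ℕ) + (B.natDegree : WithBot ℕ) := by
          rw [← hApdeg, ← degree_mul, hbez']
          rw [hApdeg]
          exact hrhs
        rw [hBpdeg]
        exact (WithBot.add_lt_add_iff_left (WithBot.coe_ne_bot)).mp h5
    -- uniqueness of bounded-degree Bezout cofactors
    have hδqne : (φQ δ) ≠ 0 := by
      simp only [hφQ, eq_intCast, Int.cast_ne_zero]
      exact hδpos.ne'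
    have hidp : Ap * (U₁.map φQ) + Bp * (V₁.map φQ) = C (φQ δ) := by
      have h6 := congrArg (Polynomial.map φQ) hid
      rw [Polynomial.map_add, Polynomial.map_mul, Polynomial.map_mul, Polynomial.map_C] at h6
      exact h6
    have hsub : Ap * ((U₁.map φQ) - C (φQ δ) * Ut) = Bp * (C (φQ δ) * Vt - (V₁.map φQ)) := by
      have h7 : Ap * (C (φQ δ) * Ut) + Bp * (C (φQ δ) * Vt) = C (φQ δ) := by
        calc Ap * (C (φQ δ) * Ut) + Bp * (C (φQ δ) * Vt)
            = C (φQ δ) * (Ap * Ut + Bp * Vt) := by ring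
          _ = C (φQ δ) := by rw [hbez, mul_one]
      linear_combination hidp - h7
    have hBdvd : Bp ∣ ((U₁.map φQ) - C (φQ δ) * Ut) := by
      apply (hcopp.symm).dvd_of_dvd_mul_left
      exact ⟨_, hsub⟩
    have hdegsub : ((U₁.map φQ) - C (φQ δ) * Ut).degree < Bp.degree := by
      apply lt_of_le_of_lt (degree_sub_le _ _)
      rw [sup_lt_iff]
      constructor
      · rw [degree_map_eq_of_injective hφQinj, hBpdeg]
        calc U₁.degree < B.degree := hU₁deg
          _ = (B.natDegree : WithBot ℕ) := degree_eq_natDegree hB.ne_zero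
      · rw [degree_mul, degree_C hδqne, zero_add]
        exact hUtdeg
    have hU1 : (U₁.map φQ) = C (φQ δ) * Ut :=
      sub_eq_zero.mp (eq_zero_of_dvd_of_degree_lt hBdvd hdegsub)
    have hV1 : (V₁.map φQ) = C (φQ δ) * Vt := by
      have h0 : Bp * (C (φQ δ) * Vt - (V₁.map φQ)) = 0 := by
        rw [← hsub, hU1]
        ring
      have hBpne : Bp ≠ 0 := hBpm.ne_zero
      have h8 := (mul_eq_zero.mp h0).resolve_left hBpne
      exact (sub_eq_zero.mp h8).symm
    -- norms of coefficients
    have hcnorm : ∀ i, ‖c i‖ ≤ (p:ℝ) ^ (ν : ℤ) := by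
      intro i
      have hceq : c i = (Bp.eval (zq i))⁻¹ * (w i)⁻¹ := rfl
      rw [hceq, norm_mul, norm_inv, norm_inv, hwnorm i, inv_one, mul_one]
      rw [hBpz i, ← PadicInt.norm_def, hBznorm i, ← zpow_neg, neg_neg]
      apply zpow_le_zpow_right₀ (le_of_lt hp1R)
      exact_mod_cast Finset.le_sup (f := nn) (Finset.mem_univ i)
    have hVtcoe : ∀ m, ‖Vt.coeff m‖ ≤ (p:ℝ) ^ (ν:ℤ) := by
      intro m
      rw [hVt, finset_sum_coeff]
      apply IsUltrametricDist.norm_sum_le_of_forall_le_of_nonneg (by positivity)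
      intro i _
      rw [coeff_C_mul, norm_mul]
      have h1 : ‖(Pq i).coeff m‖ ≤ 1 := by
        have : (Pq i).coeff m = (((Pint i).coeff m : ℤ_[p]) : ℚ_[p]) := by
          rw [show Pq i = (Pint i).map ρ from rfl, coeff_map]
          rfl
        rw [this, ← PadicInt.norm_def]
        exact PadicInt.norm_le_one _
      calc ‖c i‖ * ‖(Pq i).coeff m‖ ≤ (p:ℝ)^(ν:ℤ) * 1 :=
            mul_le_mul (hcnorm i) h1 (norm_nonneg _) (by positivity)
        _ = (p:ℝ)^(ν:ℤ) := mul_one _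
    have hδqnorm : ‖φQ δ‖ ≤ (p:ℝ) ^ (-((ν+1 : ℕ)) : ℤ) := by
      have h9 := (Padic.norm_int_le_pow_iff_dvd δ (ν+1)).mpr hpow
      exact h9
    have hVcoeff : ∀ m, (p:ℤ) ∣ V₁.coeff m := by
      intro m
      rw [← Padic.norm_intCast_lt_one_iff]
      have h1 : ((V₁.coeff m : ℤ) : ℚ_[p]) = φQ δ * Vt.coeff m := by
        have h10 := congrArg (fun q => Polynomial.coeff q m) hV1
        simpa [coeff_map, coeff_C_mul] using h10
      rw [h1, norm_mul]
      calc ‖φQ δ‖ * ‖Vt.coeff m‖ ≤ (p:ℝ)^(-((ν+1:ℕ)):ℤ) * (p:ℝ)^(ν:ℤ) :=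
            mul_le_mul hδqnorm (hVtcoe m) (norm_nonneg _) (by positivity)
        _ = (p:ℝ) ^ (-(1:ℤ)) := by
            rw [← zpow_add₀ (ne_of_gt hp0R)]
            congr 1
            push_cast
            ring
        _ < 1 := by
            rw [zpow_neg, zpow_one]
            exact inv_lt_one_of_one_lt₀ hp1R
    obtain ⟨V₂, hV₂⟩ : C (p:ℤ) ∣ V₁ := (C_dvd_iff_dvd_coeff _ _).mpr hVcoeff
    have hpδ : (p:ℤ) ∣ δ := dvd_trans (dvd_pow_self _ (Nat.succ_ne_zero ν)) hpow
    obtain ⟨δ₂, hδ₂⟩ := hpδ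
    set ψ := Int.castRingHom (ZMod p) with hψ
    have hmod : (A.map ψ) * (U₁.map ψ) = 0 := by
      have h2 : A * U₁ = C δ - B * V₁ := by linear_combination hid
      have h11 := congrArg (Polynomial.map ψ) h2
      rw [Polynomial.map_mul] at h11
      rw [h11, Polynomial.map_sub, Polynomial.map_mul, Polynomial.map_C, hV₂,
        Polynomial.map_mul, Polynomial.map_C]
      have hδ0 : ψ δ = 0 := by
        have : ((δ : ℤ) : ZMod p) = 0 := (ZMod.intCast_zmod_eq_zero_iff_dvd δ p).mpr ⟨δ₂, hδ₂⟩
        simpa [hψ] using this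
      have hp0 : ψ ((p:ℕ):ℤ) = 0 := by
        have : (((p:ℕ):ℤ) : ZMod p) = 0 := by
          push_cast
          exact ZMod.natCast_self p
        simpa [hψ] using this
      rw [hδ0, hp0]
      simp
    have hU₁0 : U₁.map ψ = 0 := by
      rcases mul_eq_zero.mp hmod with h | h
      · exact absurd h (hA.map ψ).ne_zero
      · exact h
    have hUcoeff : ∀ m, (p:ℤ) ∣ U₁.coeff m := by
      intro m
      have h12 := congrArg (fun q => Polynomial.coeff q m) hU₁0
      simp only [coeff_map, coeff_zero] at h12
      have : ((U₁.coeff m : ℤ) : ZMod p) = 0 := by simpa [hψ] using h12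
      exact (ZMod.intCast_zmod_eq_zero_iff_dvd _ p).mp this
    obtain ⟨U₂, hU₂⟩ : C (p:ℤ) ∣ U₁ := (C_dvd_iff_dvd_coeff _ _).mpr hUcoeff
    have hCp : (C ((p:ℕ):ℤ)) ≠ 0 := by
      rw [Ne, C_eq_zero]
      exact_mod_cast (Fact.out : p.Prime).ne_zero
    have hfinal : A * U₂ + B * V₂ = C δ₂ := by
      apply mul_left_cancel₀ hCp
      calc C ((p:ℕ):ℤ) * (A * U₂ + B * V₂) = A * (C ((p:ℕ):ℤ) * U₂) + B * (C ((p:ℕ):ℤ) * V₂) := by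
            ring
        _ = A * U₁ + B * V₁ := by rw [← hU₂, ← hV₂]
        _ = C δ := hid
        _ = C ((p:ℕ):ℤ) * C δ₂ := by rw [← C_mul, ← hδ₂]
    have hppos : (0:ℤ) < (p:ℤ) := by exact_mod_cast (Fact.out : p.Prime).pos
    have hδ₂pos : 0 < δ₂ := by
      by_contra hneg
      push_neg at hneg
      have h14 := mul_nonpos_of_nonneg_of_nonpos hppos.le hneg
      rw [← hδ₂] at h14
      linarith
    have hle : δ ≤ δ₂ := hδ.2 ⟨hδ₂pos, U₂, V₂, hfinal⟩
    have hp2 : (2:ℤ) ≤ (p:ℤ) := by exact_mod_cast (Fact.out : p.Prime).two_le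
    have h15 : 2 * δ₂ ≤ (p:ℤ) * δ₂ := mul_le_mul_of_nonneg_right hp2 hδ₂pos.le
    linarith
  -- Claim 2 : the witness
  haveI : Nonempty (Fin A.natDegree) := Fin.pos_iff_nonempty.mp hd
  obtain ⟨i, -, hi⟩ := Finset.exists_mem_eq_sup Finset.univ Finset.univ_nonempty nn
  set n : ℤ := (((z i).appr ν : ℕ) : ℤ) with hn
  have h1 : (p:ℤ_[p])^ν ∣ (z i - φZ n) := by
    have h13 := PadicInt.appr_spec ν (z i)
    rw [Ideal.mem_span_singleton] at h13
    have : φZ n = (((z i).appr ν : ℕ) : ℤ_[p]) := by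
      rw [hn]
      simp
    rw [this]
    exact h13
  have hAdvd : (p:ℤ)^ν ∣ A.eval n := by
    rw [← PadicInt.pow_p_dvd_int_iff]
    have h2 : ((A.eval n : ℤ) : ℤ_[p]) = (A.map φZ).eval (φZ n) := (eval_map_hom φZ A n).symm
    rw [show ((A.eval n : ℤ) : ℤ_[p]) = (A.map φZ).eval (φZ n) from h2]
    have h3 : (A.map φZ).eval (φZ n) = (A.map φZ).eval (φZ n) - (A.map φZ).eval (z i) := by
      rw [hAz0 i, sub_zero]
    rw [h3]
    exact dvd_trans ((dvd_neg).mpr h1)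
      (by simpa [neg_sub] using sub_dvd_eval_sub (φZ n) (z i) (A.map φZ))
  have hBdvd : (p:ℤ)^ν ∣ B.eval n := by
    rw [← PadicInt.pow_p_dvd_int_iff]
    have h2 : ((B.eval n : ℤ) : ℤ_[p]) = (B.map φZ).eval (φZ n) := (eval_map_hom φZ B n).symm
    rw [show ((B.eval n : ℤ) : ℤ_[p]) = (B.map φZ).eval (φZ n) from h2]
    have h4 : (B.map φZ).eval (φZ n) = ((B.map φZ).eval (φZ n) - Bz i) + Bz i := by
      ring
    rw [h4]
    apply dvd_add
    · exact dvd_trans ((dvd_neg).mpr h1)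
        (by simpa [neg_sub] using sub_dvd_eval_sub (φZ n) (z i) (B.map φZ))
    · rw [← Ideal.mem_span_singleton, ← PadicInt.norm_le_pow_iff_mem_span_pow]
      rw [hBznorm i]
      have : nn i = ν := hi.symm
      rw [this]
  exact ⟨n, dvd_trans (pow_dvd_pow _ claim1) hAdvd, dvd_trans (pow_dvd_pow _ claim1) hBdvd⟩

end DeltaProofAux

theorem valuation_delta_eq_greatest_common_root_depth (A B : Polynomial ℤ)
    (hA : A.Monic) (hB : B.Monic)
    (hcop : IsCoprime (A.map (Int.castRingHom ℚ)) (B.map (Int.castRingHom ℚ)))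
    (p : ℕ) (hp : p.Prime)
    (hAsplit : ∃ r : Fin A.natDegree → ZMod p, Function.Injective r ∧
      A.map (Int.castRingHom (ZMod p)) = ∏ i, (Polynomial.X - Polynomial.C (r i)))
    (hBsplit : ∃ s : Fin B.natDegree → ZMod p, Function.Injective s ∧
      B.map (Int.castRingHom (ZMod p)) = ∏ j, (Polynomial.X - Polynomial.C (s j)))
    (δ : ℤ)
    (hδ : IsLeast {m : ℤ | 0 < m ∧ ∃ U V : Polynomial ℤ, A * U + B * V = Polynomial.C m} δ) :
    IsGreatest {μ : ℕ | ∃ n : ℤ, ((p : ℤ) ^ μ) ∣ A.eval n ∧ ((p : ℤ) ^ μ) ∣ B.eval n}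
      (padicValInt p δ) := by
  haveI : Fact p.Prime := ⟨hp⟩
  have hδpos : 0 < δ := hδ.1.1
  have hδ0 : δ ≠ 0 := hδpos.ne'
  constructor
  · -- membership
    by_cases hk : padicValInt p δ = 0
    · refine ⟨0, ?_, ?_⟩ <;> rw [hk, pow_zero] <;> exact one_dvd _
    · have hδ1 : A.natDegree = 0 ∨ B.natDegree = 0 → δ = 1 := by
        rintro (h | h)
        · have hA1 : A = 1 := (hA.natDegree_eq_zero).mp h
          have h1 : (1:ℤ) ∈ {m : ℤ | 0 < m ∧ ∃ U V : Polynomial ℤ, A * U + B * V = C m} :=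
            ⟨one_pos, C 1, 0, by rw [hA1]; simp⟩
          have h2 := hδ.2 h1
          omega
        · have hB1 : B = 1 := (hB.natDegree_eq_zero).mp h
          have h1 : (1:ℤ) ∈ {m : ℤ | 0 < m ∧ ∃ U V : Polynomial ℤ, A * U + B * V = C m} :=
            ⟨one_pos, 0, C 1, by rw [hB1]; simp⟩
          have h2 := hδ.2 h1
          omega
      have hval1 : padicValInt p (1:ℤ) = 0 := by simp [padicValInt]
      have hd : 0 < A.natDegree := by
        rcases Nat.eq_zero_or_pos A.natDegree with h | h
        · exact absurd (by rw [hδ1 (Or.inl h)]; exact hval1) hk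
        · exact h
      have he : 0 < B.natDegree := by
        rcases Nat.eq_zero_or_pos B.natDegree with h | h
        · exact absurd (by rw [hδ1 (Or.inr h)]; exact hval1) hk
        · exact h
      exact DeltaProofAux.key hA hB hcop hAsplit hδ hd he
  · rintro μ ⟨n, hAn, hBn⟩
    obtain ⟨-, U, V, hUV⟩ := hδ.1
    have hdvd : (p:ℤ) ^ μ ∣ δ := by
      have h1 := congrArg (Polynomial.eval n) hUV
      simp only [eval_add, eval_mul, eval_C] at h1
      rw [← h1]
      exact dvd_add (Dvd.dvd.mul_right hAn _) (Dvd.dvd.mul_right hBn _)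
    rcases (padicValInt_dvd_iff μ δ).mp hdvd with h | h
    · exact absurd h hδ0
    · exact h
end

section
/- Let a and b be coprime positive integers with a or b even. Then x^a + 1 and x^b + 1 are coprime in ℚ[x], and 2 belongs to the ideal generated by x^a + 1 and x^b + 1 in ℤ[x]; consequently, for every integer n, gcd(n^a + 1, n^b + 1) ∈ {1, 2}. -/
open Polynomial

private lemma two_mem_aux (a b : ℕ) (ha : 0 < a) (hb : 0 < b)
    (hab : Nat.Coprime a b) (haeven : Even a) :
    (2 : Polynomial ℤ) ∈ Ideal.span {(Polynomial.X ^ a + 1 : Polynomial ℤ),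
      Polynomial.X ^ b + 1} := by
  set I := Ideal.span {(Polynomial.X ^ a + 1 : Polynomial ℤ), Polynomial.X ^ b + 1} with hI
  have h1 : (X : ℤ[X]) ^ a + 1 ∈ I := Ideal.subset_span (by simp)
  have h2 : (X : ℤ[X]) ^ b + 1 ∈ I := Ideal.subset_span (by simp)
  set t : ℤ[X] ⧸ I := Ideal.Quotient.mk I X with ht
  have hta : t ^ a = -1 := by
    have h0 : Ideal.Quotient.mk I ((X : ℤ[X]) ^ a + 1) = 0 :=
      Ideal.Quotient.eq_zero_iff_mem.mpr h1
    rw [map_add, map_pow, map_one] at h0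
    linear_combination h0
  have htb : t ^ b = -1 := by
    have h0 : Ideal.Quotient.mk I ((X : ℤ[X]) ^ b + 1) = 0 :=
      Ideal.Quotient.eq_zero_iff_mem.mpr h2
    rw [map_add, map_pow, map_one] at h0
    linear_combination h0
  have hu : IsUnit t := by
    apply IsUnit.of_mul_eq_one (a := t) (-(t ^ (a - 1)))
    have : t * t ^ (a - 1) = t ^ a := by
      rw [← pow_succ']
      congr 1
      omega
    linear_combination -this - hta
  obtain ⟨u, hu_eq⟩ := hu
  have e1 : u ^ ((2 * a : ℕ) : ℤ) = 1 := by
    rw [zpow_natCast]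
    ext
    push_cast [hu_eq]
    rw [pow_mul', hta]
    ring
  have e2 : u ^ ((2 * b : ℕ) : ℤ) = 1 := by
    rw [zpow_natCast]
    ext
    push_cast [hu_eq]
    rw [pow_mul', htb]
    ring
  obtain ⟨m, n, hmn⟩ := (Int.isCoprime_iff_gcd_eq_one.mpr
    (by rw [Int.gcd_natCast_natCast]; exact hab) : IsCoprime (a : ℤ) (b : ℤ))
  have hu2 : u ^ (2 : ℤ) = 1 := by
    calc u ^ (2 : ℤ) = u ^ (((2 * a : ℕ) : ℤ) * m + ((2 * b : ℕ) : ℤ) * n) := by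
          congr 1; push_cast; linear_combination -2 * hmn
    _ = (u ^ ((2 * a : ℕ) : ℤ)) ^ m * (u ^ ((2 * b : ℕ) : ℤ)) ^ n := by
          rw [zpow_add, zpow_mul, zpow_mul]
    _ = 1 := by rw [e1, e2, one_zpow, one_zpow, one_mul]
  have hu2' : u ^ (2 : ℕ) = 1 := by
    have := hu2
    rwa [show (2 : ℤ) = ((2 : ℕ) : ℤ) from by norm_num, zpow_natCast] at this
  have ht2 : t ^ 2 = 1 := by
    rw [← hu_eq, ← Units.val_pow_eq_pow_val, hu2', Units.val_one]
  obtain ⟨c, hc⟩ := haeven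
  have hneg : (-1 : ℤ[X] ⧸ I) = 1 := by
    rw [← hta, hc, show c + c = 2 * c from (two_mul c).symm, pow_mul, ht2, one_pow]
  have h20 : (2 : ℤ[X] ⧸ I) = 0 := by linear_combination -hneg
  have : Ideal.Quotient.mk I (2 : ℤ[X]) = 0 := by
    rw [map_ofNat]
    exact h20
  exact Ideal.Quotient.eq_zero_iff_mem.mp this

theorem coprime_even_case (a b : ℕ) (ha : 0 < a) (hb : 0 < b)
    (hab : Nat.Coprime a b) (heven : Even a ∨ Even b) :
    IsCoprime (Polynomial.X ^ a + 1 : Polynomial ℚ) (Polynomial.X ^ b + 1) ∧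
    (2 : Polynomial ℤ) ∈ Ideal.span {(Polynomial.X ^ a + 1 : Polynomial ℤ),
      Polynomial.X ^ b + 1} ∧
    ∀ n : ℤ, Int.gcd (n ^ a + 1) (n ^ b + 1) = 1 ∨ Int.gcd (n ^ a + 1) (n ^ b + 1) = 2 := by
  have h2mem : (2 : Polynomial ℤ) ∈ Ideal.span {(Polynomial.X ^ a + 1 : Polynomial ℤ),
      Polynomial.X ^ b + 1} := by
    rcases heven with h | h
    · exact two_mem_aux a b ha hb hab h
    · have := two_mem_aux b a hb ha hab.symm h
      rwa [Set.pair_comm]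
  obtain ⟨p, q, hpq⟩ := Ideal.mem_span_pair.mp h2mem
  refine ⟨?_, h2mem, ?_⟩
  · -- coprimality over ℚ
    have hmap := congrArg (Polynomial.map (Int.castRingHom ℚ)) hpq
    simp only [Polynomial.map_add, Polynomial.map_mul, Polynomial.map_pow,
      Polynomial.map_X, Polynomial.map_one, Polynomial.map_ofNat] at hmap
    refine ⟨Polynomial.C (1/2 : ℚ) * p.map (Int.castRingHom ℚ),
      Polynomial.C (1/2 : ℚ) * q.map (Int.castRingHom ℚ), ?_⟩
    have hhalf : (Polynomial.C (1/2 : ℚ)) * 2 = 1 := by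
      rw [← map_ofNat (Polynomial.C : ℚ →+* ℚ[X]) 2, ← Polynomial.C_mul]
      norm_num
    linear_combination (Polynomial.C (1/2 : ℚ)) * hmap + hhalf
  · intro n
    have heval := congrArg (Polynomial.eval n) hpq
    simp only [Polynomial.eval_add, Polynomial.eval_mul, Polynomial.eval_pow,
      Polynomial.eval_X, Polynomial.eval_one, Polynomial.eval_ofNat] at heval
    have hdvd : (↑(Int.gcd (n ^ a + 1) (n ^ b + 1)) : ℤ) ∣ 2 := by
      rw [← heval]
      exact dvd_add (Dvd.dvd.mul_left (Int.gcd_dvd_left _ _) _)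
        (Dvd.dvd.mul_left (Int.gcd_dvd_right _ _) _)
    have : Int.gcd (n ^ a + 1) (n ^ b + 1) ∣ 2 := by exact_mod_cast hdvd
    exact (Nat.dvd_prime Nat.prime_two).mp this
end
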